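/- Let I be a PPN-3-SAT instance with clauses C₁,…,C_m (2-clauses being C₁,…,C_{m₂} and 3-clauses C_{m₂+1},…,C_m), and construct the HRRCDR instance I' with the following gadgets (all hospital capacities are 1; notation: for variable x_i, its k-th positive occurrence (k=1,2) is the ℓ_{i,k}-th literal of clause C_{j_{i,k}} and its negative occurrence is the ℓ_{i,3}-th literal of C_{j_{i,3}}; for clause C_j whose ℓ-th literal is of variable x_{i_{j,ℓ}}, k_{j,ℓ} ∈ {1,2,3} indicates which of those three occurrences it is). Variable gadget for x_i: residents e'_{i,1}: (b'_{i,1}, b'_{i,3}) and e'_{i,2}: (b'_{i,2}, b'_{i,4}); hospitals b'_{i,1}: (e'_{i,1}), x'_{i,1}: (c'_{j_{i,1},ℓ_{i,1}}), b'_{i,2}: (e'_{i,2}), x'_{i,2}: (c'_{j_{i,2},ℓ_{i,2}}), b'_{i,3}: (e'_{i,1}), b'_{i,4}: (e'_{i,2}), x'_{i,3}: (c'_{j_{i,3},ℓ_{i,3}}); regions {b'_{i,1}, x'_{i,1}} with cap 1, {b'_{i,2}, x'_{i,2}} with cap 1, and {b'_{i,3}, b'_{i,4}, x'_{i,3}}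 with cap 2. Clause gadget for a 2-clause C_j: residents c'_{j,1}: (x'_{i_{j,1},k_{j,1}}, a'_{j,1}) and c'_{j,2}: (x'_{i_{j,2},k_{j,2}}, a'_{j,1}); hospitals a'_{j,1}: (c'_{j,1}, c'_{j,2}) and y'_j: (z'_j); region {a'_{j,1}, y'_j} with cap 1. Clause gadget for a 3-clause C_j: residents c'_{j,1}: (x'_{i_{j,1},k_{j,1}}, a'_{j,1}), c'_{j,2}: (x'_{i_{j,2},k_{j,2}}, a'_{j,1}), d'_j: (a'_{j,2}, a'_{j,3}), c'_{j,3}: (x'_{i_{j,3},k_{j,3}}, a'_{j,3}); hospitals a'_{j,1}: (c'_{j,1}, c'_{j,2}), a'_{j,2}: (d'_j), a'_{j,3}: (d'_j, c'_{j,3}), y'_j: (z'_j); regions {a'_{j,1}, a'_{j,2}} with cap 1 and {a'_{j,3}, y'_j} with cap 1. Terminal gadget for each clause C_j: residents g'_{j,1}: (g'_{j,2}, g'_{j,4}), g'_{j,3}: (g'_{j,4}, g'_{j,2}), z'_j: (y'_j, t'_j); hospitals g'_{j,2}: (g'_{j,3}, g'_{j,1}), g'_{j,4}: (g'_{j,1},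 g'_{j,3}), t'_j: (z'_j); region {g'_{j,2}, g'_{j,4}, t'_j} with cap 1. Then I' admits a strongly stable matching if and only if I is satisfiable. (Note that in I' every resident's list has length ≤ 2, every hospital's list has length ≤ 2, every region has size ≤ 3, and regions are pairwise disjoint.) -/

import Mathlib

/-- `a` is strictly preferred to `b` in the strictly ordered preference list `l`
(most preferred first). -/
def ListPref {α : Type*} [DecidableEq α] (l : List α) (a b : α) : Prop :=
  b ∈ l ∧ l.idxOf a < l.idxOf b

/-- An instance of the Hospitals/Residents problem with Regional Caps (HRRC):
residents `R`, hospitals `H`, strict preference lists on both sides,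
hospital capacities `q`, a family `regions` of regions with regional caps `cap`. -/
structure HRRC (R H : Type*) where
  prefR : R → List H
  prefH : H → List R
  q : H → ℕ
  regions : Set (Finset H)
  cap : Finset H → ℕ

namespace HRRC

variable {R H : Type*} [DecidableEq R] [DecidableEq H]

/-- Well-formedness: preference lists are strict (no repetitions), acceptability is
mutual, and regions are nonempty. -/
def WellFormed (I : HRRC R H) : Prop :=
  (∀ r, (I.prefR r).Nodup) ∧ (∀ h, (I.prefH h).Nodup) ∧
  (∀ r h, h ∈ I.prefR r ↔ r ∈ I.prefH h) ∧
  (∀ E ∈ I.regions, E.Nonempty)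

/-- `M(h)`: the set of residents assigned to hospital `h`. -/
def assignedTo (M : Finset (R × H)) (h : H) : Finset R :=
  (M.filter fun p => p.2 = h).image Prod.fst

/-- `M(E)`: the set of residents assigned to some hospital in the region `E`. -/
def assignedIn (M : Finset (R × H)) (E : Finset H) : Finset R :=
  (M.filter fun p => p.2 ∈ E).image Prod.fst

/-- `M` is a matching: pairs are mutually acceptable, each resident has at most one
hospital, and no hospital exceeds its capacity. -/
def IsMatching (I : HRRC R H) (M : Finset (R × H)) : Prop :=
  (∀ p ∈ M, p.2 ∈ I.prefR p.1 ∧ p.1 ∈ I.prefH p.2) ∧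
  (∀ r h h', (r, h) ∈ M → (r, h') ∈ M → h = h') ∧
  (∀ h, (assignedTo M h).card ≤ I.q h)

/-- Feasibility: all regional caps are respected. -/
def FeasibleCaps (I : HRRC R H) (M : Finset (R × H)) : Prop :=
  ∀ E ∈ I.regions, (assignedIn M E).card ≤ I.cap E

/-- `M \ {(r, M(r))} ∪ {(r, h)}`. -/
def move (M : Finset (R × H)) (r : R) (h : H) : Finset (R × H) :=
  (M.filter fun p => p.1 ≠ r) ∪ {(r, h)}

/-- `(r, h)` is a blocking pair for `M`. -/
def IsBlockingPair (I : HRRC R H) (M : Finset (R × H)) (r : R) (h : H) : Prop :=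
  (r, h) ∉ M ∧ (h ∈ I.prefR r ∧ r ∈ I.prefH h) ∧
  ((∀ h', (r, h') ∉ M) ∨ ∃ h', (r, h') ∈ M ∧ ListPref (I.prefR r) h h') ∧
  ((assignedTo M h).card < I.q h ∨ ∃ r' ∈ assignedTo M h, ListPref (I.prefH h) r r')

/-- `(r, h)` is a strong blocking pair for `M`. -/
def IsSBP (I : HRRC R H) (M : Finset (R × H)) (r : R) (h : H) : Prop :=
  I.IsBlockingPair M r h ∧
  (I.FeasibleCaps (move M r h) ∨ ∃ r' ∈ assignedTo M h, ListPref (I.prefH h) r r')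

/-- `M` is a strongly stable matching of `I`. -/
def IsStronglyStable (I : HRRC R H) (M : Finset (R × H)) : Prop :=
  I.IsMatching M ∧ I.FeasibleCaps M ∧ ∀ r h, ¬ I.IsSBP M r h

end HRRC

/- A PPN-3-SAT instance with `n` variables and `m` clauses is encoded as follows:
clauses `j` with `(j : ℕ) < m₂` are 2-clauses, the others are 3-clauses (so clause
`j` has length `if (j : ℕ) < m₂ then 2 else 3`, and its valid literal positions are
the `l : Fin 3` below that length); `v j l` is the variable of the `l`-th literal of
clause `j` and `pol j l` its polarity; `occ i k = (j_{i,k}, ℓ_{i,k})` is the position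
of the `k`-th occurrence of variable `i` (`k = 0, 1` its two positive occurrences,
`k = 2` its negative occurrence); `kIdx j l = k_{j,l}` tells which occurrence of its
variable the `l`-th literal of clause `j` is. -/

/-- Residents of `I'`: `e'_{i,1}, e'_{i,2}` (here `e i 0, e i 1`);
`c'_{j,1}, c'_{j,2}, c'_{j,3}` (here `c j 0, c j 1, c j 2`; `c j 2` is unused for a
2-clause `j` and gets an empty list); `d'_j` (unused for 2-clauses);
`g'_{j,1}, g'_{j,3}, z'_j`. -/
inductive Res11 (n m : ℕ) where
  | e (i : Fin n) (t : Fin 2)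
  | c (j : Fin m) (l : Fin 3)
  | d (j : Fin m)
  | g1 (j : Fin m)
  | g3 (j : Fin m)
  | z (j : Fin m)
deriving DecidableEq

/-- Hospitals of `I'`: `b'_{i,1}, …, b'_{i,4}` (here `b i 0, …, b i 3`);
`x'_{i,1}, x'_{i,2}, x'_{i,3}` (here `x i 0, x i 1, x i 2`);
`a'_{j,1}, a'_{j,2}, a'_{j,3}` (here `a j 0, a j 1, a j 2`; the latter two are unused
for 2-clauses); `y'_j`; `g'_{j,2}, g'_{j,4}, t'_j`. -/
inductive Hos11 (n m : ℕ) where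
  | b (i : Fin n) (t : Fin 4)
  | x (i : Fin n) (k : Fin 3)
  | a (j : Fin m) (t : Fin 3)
  | y (j : Fin m)
  | g2 (j : Fin m)
  | g4 (j : Fin m)
  | t (j : Fin m)
deriving DecidableEq

/-- Resident preference lists of `I'` (per Figures in the proof of Theorem `(2,2,3)`):
`e'_{i,1}: (b'_{i,1}, b'_{i,3})`, `e'_{i,2}: (b'_{i,2}, b'_{i,4})`,
`c'_{j,1}: (x'_{i_{j,1},k_{j,1}}, a'_{j,1})`, `c'_{j,2}: (x'_{i_{j,2},k_{j,2}}, a'_{j,1})`,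
`c'_{j,3}: (x'_{i_{j,3},k_{j,3}}, a'_{j,3})` (3-clauses only),
`d'_j: (a'_{j,2}, a'_{j,3})` (3-clauses only),
`g'_{j,1}: (g'_{j,2}, g'_{j,4})`, `g'_{j,3}: (g'_{j,4}, g'_{j,2})`, `z'_j: (y'_j, t'_j)`. -/
def prefRes11 {n m : ℕ} (m₂ : ℕ) (v : Fin m → Fin 3 → Fin n)
    (kIdx : Fin m → Fin 3 → Fin 3) : Res11 n m → List (Hos11 n m)
  | .e i t => if (t : ℕ) = 0 then [.b i 0, .b i 2] else [.b i 1, .b i 3]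
  | .c j l =>
      if (l : ℕ) < 2 then [.x (v j l) (kIdx j l), .a j 0]
      else if (j : ℕ) < m₂ then []
      else [.x (v j l) (kIdx j l), .a j 2]
  | .d j => if (j : ℕ) < m₂ then [] else [.a j 1, .a j 2]
  | .g1 j => [.g2 j, .g4 j]
  | .g3 j => [.g4 j, .g2 j]
  | .z j => [.y j, .t j]

/-- Hospital preference lists of `I'`:
`b'_{i,1}: (e'_{i,1})`, `b'_{i,2}: (e'_{i,2})`, `b'_{i,3}: (e'_{i,1})`,
`b'_{i,4}: (e'_{i,2})`, `x'_{i,k}: (c'_{j_{i,k},ℓ_{i,k}})`,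
`a'_{j,1}: (c'_{j,1}, c'_{j,2})`, `a'_{j,2}: (d'_j)` and `a'_{j,3}: (d'_j, c'_{j,3})`
(3-clauses only), `y'_j: (z'_j)`, `g'_{j,2}: (g'_{j,3}, g'_{j,1})`,
`g'_{j,4}: (g'_{j,1}, g'_{j,3})`, `t'_j: (z'_j)`. -/
def prefHos11 {n m : ℕ} (m₂ : ℕ) (occ : Fin n → Fin 3 → Fin m × Fin 3) :
    Hos11 n m → List (Res11 n m)
  | .b i t => if (t : ℕ) % 2 = 0 then [.e i 0] else [.e i 1]
  | .x i k => [.c (occ i k).1 (occ i k).2]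
  | .a j t =>
      if (t : ℕ) = 0 then [.c j 0, .c j 1]
      else if (j : ℕ) < m₂ then []
      else if (t : ℕ) = 1 then [.d j]
      else [.d j, .c j 2]
  | .y j => [.z j]
  | .g2 j => [.g3 j, .g1 j]
  | .g4 j => [.g1 j, .g3 j]
  | .t j => [.z j]

/-- Regions of `I'`: for each variable `i`, `{b'_{i,1}, x'_{i,1}}`,
`{b'_{i,2}, x'_{i,2}}` and `{b'_{i,3}, b'_{i,4}, x'_{i,3}}`; for each 2-clause `j`,
`{a'_{j,1}, y'_j}`; for each 3-clause `j`, `{a'_{j,1}, a'_{j,2}}` and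
`{a'_{j,3}, y'_j}`; for each clause `j`, `{g'_{j,2}, g'_{j,4}, t'_j}`. -/
def regions11 {n m : ℕ} (m₂ : ℕ) : Set (Finset (Hos11 n m)) :=
  { E | (∃ i : Fin n,
      E = {Hos11.b i 0, Hos11.x i 0} ∨
      E = {Hos11.b i 1, Hos11.x i 1} ∨
      E = {Hos11.b i 2, Hos11.b i 3, Hos11.x i 2}) ∨
    (∃ j : Fin m,
      ((j : ℕ) < m₂ ∧ E = {Hos11.a j 0, Hos11.y j}) ∨
      (¬ (j : ℕ) < m₂ ∧
        (E = {Hos11.a j 0, Hos11.a j 1} ∨ E = {Hos11.a j 2, Hos11.y j})) ∨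
      E = {Hos11.g2 j, Hos11.g4 j, Hos11.t j}) }

open Classical in
/-- Regional caps of `I'`: the region `{b'_{i,3}, b'_{i,4}, x'_{i,3}}` has cap 2,
all other regions have cap 1. -/
noncomputable def cap11 {n m : ℕ} : Finset (Hos11 n m) → ℕ := fun E =>
  if ∃ i : Fin n, E = {Hos11.b i 2, Hos11.b i 3, Hos11.x i 2} then 2 else 1

/-- The HRRCDR instance `I'` built from a PPN-3-SAT instance (all hospital
capacities are 1). -/
noncomputable def ppnInstance223 {n m : ℕ} (m₂ : ℕ) (v : Fin m → Fin 3 → Fin n)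
    (occ : Fin n → Fin 3 → Fin m × Fin 3) (kIdx : Fin m → Fin 3 → Fin 3) :
    HRRC (Res11 n m) (Hos11 n m) where
  prefR := prefRes11 m₂ v kIdx
  prefH := prefHos11 m₂ occ
  q := fun _ => 1
  regions := regions11 m₂
  cap := cap11


/-! ### Auxiliary general lemmas -/

lemma listPref_pair {α : Type*} [DecidableEq α] {a b : α} (h : a ≠ b) :
    ListPref [a, b] a b := by
  refine ⟨by simp, ?_⟩
  rw [List.idxOf_cons_self, List.idxOf_cons_ne _ h, List.idxOf_cons_self]
  norm_num

lemma not_listPref_head {α : Type*} [DecidableEq α] (l : List α) (a b : α) :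
    ¬ ListPref (a :: l) b a := by
  rintro ⟨_, hlt⟩
  simp [List.idxOf_cons_self] at hlt

namespace HRRC

variable {R H : Type*} [DecidableEq R] [DecidableEq H]

lemma mem_assignedTo {M : Finset (R × H)} {r : R} {h : H} :
    r ∈ assignedTo M h ↔ (r, h) ∈ M := by
  constructor
  · intro hr
    simp only [assignedTo, Finset.mem_image, Finset.mem_filter] at hr
    obtain ⟨⟨r', h'⟩, ⟨hm, h2⟩, h1⟩ := hr
    cases h1; cases h2; exact hm
  · intro hm
    simp only [assignedTo, Finset.mem_image, Finset.mem_filter]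
    exact ⟨(r, h), ⟨hm, rfl⟩, rfl⟩

lemma mem_assignedIn {M : Finset (R × H)} {r : R} {E : Finset H} :
    r ∈ assignedIn M E ↔ ∃ h ∈ E, (r, h) ∈ M := by
  constructor
  · intro hr
    simp only [assignedIn, Finset.mem_image, Finset.mem_filter] at hr
    obtain ⟨⟨r', h'⟩, ⟨hm, h2⟩, h1⟩ := hr
    cases h1; exact ⟨h', h2, hm⟩
  · rintro ⟨h, hE, hm⟩
    simp only [assignedIn, Finset.mem_image, Finset.mem_filter]
    exact ⟨(r, h), ⟨hm, hE⟩, rfl⟩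

lemma mem_move {M : Finset (R × H)} {r : R} {h : H} {p : R × H} :
    p ∈ move M r h ↔ (p ∈ M ∧ p.1 ≠ r) ∨ p = (r, h) := by
  simp [move, Finset.mem_union, Finset.mem_filter]
  exact or_comm

lemma mem_assignedIn_move {M : Finset (R × H)} {r r' : R} {h : H} {E : Finset H} :
    r' ∈ assignedIn (move M r h) E ↔
      (r' = r ∧ h ∈ E) ∨ (r' ≠ r ∧ ∃ h' ∈ E, (r', h') ∈ M) := by
  rw [mem_assignedIn]
  constructor
  · rintro ⟨h', hE, hm⟩
    rw [mem_move] at hm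
    rcases hm with ⟨hm, hne⟩ | heq
    · exact Or.inr ⟨hne, h', hE, hm⟩
    · have h1 := congrArg Prod.fst heq
      have h2 := congrArg Prod.snd heq
      simp only [] at h1 h2
      exact Or.inl ⟨h1, h2 ▸ hE⟩
  · rintro (⟨rfl, hE⟩ | ⟨hne, h', hE, hm⟩)
    · exact ⟨h, hE, mem_move.mpr (Or.inr rfl)⟩
    · exact ⟨h', hE, mem_move.mpr (Or.inl ⟨hm, hne⟩)⟩

lemma assignedIn_move_subset {M : Finset (R × H)} {r : R} {h : H} {E : Finset H}
    (hh : h ∉ E) : assignedIn (move M r h) E ⊆ assignedIn M E := by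
  intro r' hr'
  rw [mem_assignedIn_move] at hr'
  rcases hr' with ⟨_, hE⟩ | ⟨_, h', hE, hm⟩
  · exact absurd hE hh
  · exact mem_assignedIn.mpr ⟨h', hE, hm⟩

/-- If `M` is feasible but `move M r h` is not, the violated region contains `h`. -/
lemma violated_region {I : HRRC R H} {M : Finset (R × H)} {r : R} {h : H}
    (hM : I.FeasibleCaps M) (hmv : ¬ I.FeasibleCaps (move M r h)) :
    ∃ E ∈ I.regions, h ∈ E ∧ I.cap E < (assignedIn (move M r h) E).card := by
  simp only [FeasibleCaps, not_forall, not_le] at hmv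
  obtain ⟨E, hE, hcard⟩ := hmv
  refine ⟨E, hE, ?_, hcard⟩
  by_contra hh
  exact absurd ((Finset.card_le_card (assignedIn_move_subset hh)).trans (hM E hE))
    (not_le.mpr hcard)

end HRRC

/-! ### Fintype instances -/

private def resCode {n m : ℕ} : Res11 n m → (Fin n × Fin 2) ⊕ (Fin m × Fin 3) ⊕ (Fin m × Fin 4)
  | .e i t => Sum.inl (i, t)
  | .c j l => Sum.inr (Sum.inl (j, l))
  | .d j => Sum.inr (Sum.inr (j, 0))
  | .g1 j => Sum.inr (Sum.inr (j, 1))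
  | .g3 j => Sum.inr (Sum.inr (j, 2))
  | .z j => Sum.inr (Sum.inr (j, 3))

noncomputable instance {n m : ℕ} : Fintype (Res11 n m) :=
  Fintype.ofInjective resCode (by
    intro x y hxy
    cases x <;> cases y <;> simp_all [resCode])

private def hosCode {n m : ℕ} :
    Hos11 n m → (Fin n × Fin 4) ⊕ (Fin n × Fin 3) ⊕ (Fin m × Fin 3) ⊕ (Fin m × Fin 4)
  | .b i t => Sum.inl (i, t)
  | .x i k => Sum.inr (Sum.inl (i, k))
  | .a j t => Sum.inr (Sum.inr (Sum.inl (j, t)))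
  | .y j => Sum.inr (Sum.inr (Sum.inr (j, 0)))
  | .g2 j => Sum.inr (Sum.inr (Sum.inr (j, 1)))
  | .g4 j => Sum.inr (Sum.inr (Sum.inr (j, 2)))
  | .t j => Sum.inr (Sum.inr (Sum.inr (j, 3)))

noncomputable instance {n m : ℕ} : Fintype (Hos11 n m) :=
  Fintype.ofInjective hosCode (by
    intro x y hxy
    cases x <;> cases y <;> simp_all [hosCode])

/-! ### Projections of the instance -/

@[simp] lemma pp_prefR {n m : ℕ} (m₂ : ℕ) (v : Fin m → Fin 3 → Fin n)
    (occ : Fin n → Fin 3 → Fin m × Fin 3) (kIdx : Fin m → Fin 3 → Fin 3) :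
    (ppnInstance223 m₂ v occ kIdx).prefR = prefRes11 m₂ v kIdx := rfl

@[simp] lemma pp_prefH {n m : ℕ} (m₂ : ℕ) (v : Fin m → Fin 3 → Fin n)
    (occ : Fin n → Fin 3 → Fin m × Fin 3) (kIdx : Fin m → Fin 3 → Fin 3) :
    (ppnInstance223 m₂ v occ kIdx).prefH = prefHos11 m₂ occ := rfl

@[simp] lemma pp_q {n m : ℕ} (m₂ : ℕ) (v : Fin m → Fin 3 → Fin n)
    (occ : Fin n → Fin 3 → Fin m × Fin 3) (kIdx : Fin m → Fin 3 → Fin 3) (h : Hos11 n m) :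
    (ppnInstance223 m₂ v occ kIdx).q h = 1 := rfl

@[simp] lemma pp_regions {n m : ℕ} (m₂ : ℕ) (v : Fin m → Fin 3 → Fin n)
    (occ : Fin n → Fin 3 → Fin m × Fin 3) (kIdx : Fin m → Fin 3 → Fin 3) :
    (ppnInstance223 m₂ v occ kIdx).regions = regions11 m₂ := rfl

@[simp] lemma pp_cap {n m : ℕ} (m₂ : ℕ) (v : Fin m → Fin 3 → Fin n)
    (occ : Fin n → Fin 3 → Fin m × Fin 3) (kIdx : Fin m → Fin 3 → Fin 3) :
    (ppnInstance223 m₂ v occ kIdx).cap = cap11 := rfl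

/-! ### Region membership characterizations -/

section Regions

variable {n m m₂ : ℕ} {E : Finset (Hos11 n m)}

lemma region_g2 (hE : E ∈ regions11 (n := n) (m := m) m₂) {j : Fin m}
    (hmem : Hos11.g2 j ∈ E) : E = {Hos11.g2 j, Hos11.g4 j, Hos11.t j} := by
  simp only [regions11, Set.mem_setOf_eq] at hE
  rcases hE with ⟨i, rfl | rfl | rfl⟩ | ⟨j', ⟨_, rfl⟩ | ⟨_, rfl | rfl⟩ | rfl⟩ <;>
    simp_all

lemma region_g4 (hE : E ∈ regions11 (n := n) (m := m) m₂) {j : Fin m}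
    (hmem : Hos11.g4 j ∈ E) : E = {Hos11.g2 j, Hos11.g4 j, Hos11.t j} := by
  simp only [regions11, Set.mem_setOf_eq] at hE
  rcases hE with ⟨i, rfl | rfl | rfl⟩ | ⟨j', ⟨_, rfl⟩ | ⟨_, rfl | rfl⟩ | rfl⟩ <;>
    simp_all

lemma region_y (hE : E ∈ regions11 (n := n) (m := m) m₂) {j : Fin m}
    (hmem : Hos11.y j ∈ E) :
    ((j : ℕ) < m₂ ∧ E = {Hos11.a j 0, Hos11.y j}) ∨
      (¬ (j : ℕ) < m₂ ∧ E = {Hos11.a j 2, Hos11.y j}) := by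
  simp only [regions11, Set.mem_setOf_eq] at hE
  rcases hE with ⟨i, rfl | rfl | rfl⟩ | ⟨j', ⟨hj', rfl⟩ | ⟨hj', rfl | rfl⟩ | rfl⟩ <;>
    simp_all

lemma region_a1 (hE : E ∈ regions11 (n := n) (m := m) m₂) {j : Fin m}
    (hmem : Hos11.a j 1 ∈ E) :
    ¬ (j : ℕ) < m₂ ∧ E = {Hos11.a j 0, Hos11.a j 1} := by
  simp only [regions11, Set.mem_setOf_eq] at hE
  rcases hE with ⟨i, rfl | rfl | rfl⟩ | ⟨j', ⟨hj', rfl⟩ | ⟨hj', rfl | rfl⟩ | rfl⟩ <;>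
    simp_all

lemma region_x0 (hE : E ∈ regions11 (n := n) (m := m) m₂) {i : Fin n}
    (hmem : Hos11.x i 0 ∈ E) : E = {Hos11.b i 0, Hos11.x i 0} := by
  simp only [regions11, Set.mem_setOf_eq] at hE
  rcases hE with ⟨i', rfl | rfl | rfl⟩ | ⟨j', ⟨hj', rfl⟩ | ⟨hj', rfl | rfl⟩ | rfl⟩ <;>
    simp_all

lemma region_x1 (hE : E ∈ regions11 (n := n) (m := m) m₂) {i : Fin n}
    (hmem : Hos11.x i 1 ∈ E) : E = {Hos11.b i 1, Hos11.x i 1} := by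
  simp only [regions11, Set.mem_setOf_eq] at hE
  rcases hE with ⟨i', rfl | rfl | rfl⟩ | ⟨j', ⟨hj', rfl⟩ | ⟨hj', rfl | rfl⟩ | rfl⟩ <;>
    simp_all

lemma region_x2 (hE : E ∈ regions11 (n := n) (m := m) m₂) {i : Fin n}
    (hmem : Hos11.x i 2 ∈ E) : E = {Hos11.b i 2, Hos11.b i 3, Hos11.x i 2} := by
  simp only [regions11, Set.mem_setOf_eq] at hE
  rcases hE with ⟨i', rfl | rfl | rfl⟩ | ⟨j', ⟨hj', rfl⟩ | ⟨hj', rfl | rfl⟩ | rfl⟩ <;>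
    simp_all

end Regions

/-! ### Caps of the concrete regions -/

section Caps

variable {n m : ℕ}

lemma capNE {E : Finset (Hos11 n m)} {h : Hos11 n m} (hmem : h ∈ E)
    (hne : ∀ i : Fin n, h ∉ ({Hos11.b i 2, Hos11.b i 3, Hos11.x i 2} : Finset (Hos11 n m))) :
    cap11 E = 1 := by
  rw [cap11, if_neg]
  rintro ⟨i, rfl⟩
  exact hne i hmem

lemma cap_bx0 (i : Fin n) : cap11 ({Hos11.b i 0, Hos11.x i 0} : Finset (Hos11 n m)) = 1 :=
  capNE (h := Hos11.b i 0) (by simp) (by intro i'; simp)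

lemma cap_bx1 (i : Fin n) : cap11 ({Hos11.b i 1, Hos11.x i 1} : Finset (Hos11 n m)) = 1 :=
  capNE (h := Hos11.b i 1) (by simp) (by intro i'; simp)

lemma cap_bx2 (i : Fin n) :
    cap11 ({Hos11.b i 2, Hos11.b i 3, Hos11.x i 2} : Finset (Hos11 n m)) = 2 := by
  rw [cap11, if_pos ⟨i, rfl⟩]

lemma cap_ay (j : Fin m) (t : Fin 3) :
    cap11 ({Hos11.a j t, Hos11.y j} : Finset (Hos11 n m)) = 1 :=
  capNE (h := Hos11.y j) (by simp) (by intro i'; simp)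

lemma cap_aa (j : Fin m) :
    cap11 ({Hos11.a j 0, Hos11.a j 1} : Finset (Hos11 n m)) = 1 :=
  capNE (h := Hos11.a j 0) (by simp) (by intro i'; simp)

lemma cap_g (j : Fin m) :
    cap11 ({Hos11.g2 j, Hos11.g4 j, Hos11.t j} : Finset (Hos11 n m)) = 1 :=
  capNE (h := Hos11.g2 j) (by simp) (by intro i'; simp)

end Caps

@[simp] lemma fin3_v0 : ((0 : Fin 3) : ℕ) = 0 := rfl
@[simp] lemma fin3_v1 : ((1 : Fin 3) : ℕ) = 1 := rfl
@[simp] lemma fin3_v2 : ((2 : Fin 3) : ℕ) = 2 := rfl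
@[simp] lemma fin2_v0 : ((0 : Fin 2) : ℕ) = 0 := rfl
@[simp] lemma fin2_v1 : ((1 : Fin 2) : ℕ) = 1 := rfl
@[simp] lemma fin4_v0 : ((0 : Fin 4) : ℕ) = 0 := rfl
@[simp] lemma fin4_v1 : ((1 : Fin 4) : ℕ) = 1 := rfl
@[simp] lemma fin4_v2 : ((2 : Fin 4) : ℕ) = 2 := rfl
@[simp] lemma fin4_v3 : ((3 : Fin 4) : ℕ) = 3 := rfl

/-! ### Forward direction: a strongly stable matching yields a satisfying assignment -/

open HRRC

lemma card_lt_one_of_empty {R : Type*} [DecidableEq R] {H : Type*} [DecidableEq H]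
    {M : Finset (R × H)} {h : H} (hemp : ∀ r, (r, h) ∉ M) :
    (HRRC.assignedTo M h).card < 1 := by
  have : HRRC.assignedTo M h = ∅ :=
    Finset.eq_empty_iff_forall_notMem.mpr fun r hr => hemp r (HRRC.mem_assignedTo.mp hr)
  rw [this]
  simp

section Forward

variable {n m m₂ : ℕ} {v : Fin m → Fin 3 → Fin n}
  {occ : Fin n → Fin 3 → Fin m × Fin 3} {kIdx : Fin m → Fin 3 → Fin 3}
  {M : Finset (Res11 n m × Hos11 n m)}

/-- In any strongly stable matching, `z j` is assigned to `t j`. -/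
lemma L_zt (hM : (ppnInstance223 m₂ v occ kIdx).IsStronglyStable M) (j : Fin m) :
    (Res11.z j, Hos11.t j) ∈ M := by
  obtain ⟨⟨hacc, huniq, hqcap⟩, hfeas, hnsbp⟩ := hM
  by_contra hzt
  -- who can be matched inside the terminal region
  have hAt : ∀ (r : Res11 n m) h', (r, h') ∈ M →
      h' ∈ ({Hos11.g2 j, Hos11.g4 j, Hos11.t j} : Finset (Hos11 n m)) →
      r = Res11.g1 j ∨ r = Res11.g3 j := by
    intro r h' hm hmem
    have h2 := (hacc _ hm).2
    simp only [Finset.mem_insert, Finset.mem_singleton] at hmem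
    rcases hmem with rfl | rfl | rfl
    · simp only [pp_prefH, prefHos11, List.mem_cons, List.mem_singleton,
        List.not_mem_nil, or_false] at h2
      tauto
    · simp only [pp_prefH, prefHos11, List.mem_cons, List.mem_singleton,
        List.not_mem_nil, or_false] at h2
      tauto
    · simp only [pp_prefH, prefHos11, List.mem_singleton] at h2
      exact absurd (h2 ▸ hm) hzt
  have hg1h : ∀ h, (Res11.g1 j, h) ∈ M → h = Hos11.g2 j ∨ h = Hos11.g4 j := by
    intro h hm
    have h1 := (hacc _ hm).1
    simp only [pp_prefR, prefRes11, List.mem_cons, List.mem_singleton,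
      List.not_mem_nil, or_false] at h1
    exact h1
  have hg3h : ∀ h, (Res11.g3 j, h) ∈ M → h = Hos11.g4 j ∨ h = Hos11.g2 j := by
    intro h hm
    have h1 := (hacc _ hm).1
    simp only [pp_prefR, prefRes11, List.mem_cons, List.mem_singleton,
      List.not_mem_nil, or_false] at h1
    exact h1
  have hreg : ({Hos11.g2 j, Hos11.g4 j, Hos11.t j} : Finset (Hos11 n m)) ∈ regions11 m₂ :=
    Or.inr ⟨j, Or.inr (Or.inr rfl)⟩
  have hcard : (assignedIn M ({Hos11.g2 j, Hos11.g4 j, Hos11.t j} : Finset (Hos11 n m))).card ≤ 1 := by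
    have := hfeas _ hreg
    rwa [pp_cap, cap_g] at this
  -- both of g1, g3 matched is impossible
  have hnot_both : ¬ (∃ h1, (Res11.g1 j, h1) ∈ M ∧
      h1 ∈ ({Hos11.g2 j, Hos11.g4 j, Hos11.t j} : Finset (Hos11 n m))) ∨
      ¬ (∃ h3, (Res11.g3 j, h3) ∈ M ∧
      h3 ∈ ({Hos11.g2 j, Hos11.g4 j, Hos11.t j} : Finset (Hos11 n m))) := by
    by_contra hcon
    push_neg at hcon
    obtain ⟨⟨h1, hm1, hmem1⟩, ⟨h3, hm3, hmem3⟩⟩ := hcon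
    have hsub : ({Res11.g1 j, Res11.g3 j} : Finset (Res11 n m)) ⊆
        assignedIn M ({Hos11.g2 j, Hos11.g4 j, Hos11.t j} : Finset (Hos11 n m)) := by
      intro r hr
      simp only [Finset.mem_insert, Finset.mem_singleton] at hr
      rcases hr with rfl | rfl
      · exact mem_assignedIn.mpr ⟨h1, hmem1, hm1⟩
      · exact mem_assignedIn.mpr ⟨h3, hmem3, hm3⟩
    have h2le : 2 ≤ (assignedIn M ({Hos11.g2 j, Hos11.g4 j, Hos11.t j} : Finset (Hos11 n m))).card := by
      calc 2 = ({Res11.g1 j, Res11.g3 j} : Finset (Res11 n m)).card := by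
              rw [Finset.card_insert_of_notMem (by simp), Finset.card_singleton]
           _ ≤ _ := Finset.card_le_card hsub
    omega
  -- helper: a feasible move into the terminal region when `r0` is its only occupant
  have hmvfeas : ∀ (r0 : Res11 n m) (h0 : Hos11 n m),
      h0 ∈ ({Hos11.g2 j, Hos11.g4 j, Hos11.t j} : Finset (Hos11 n m)) →
      (∀ E' ∈ regions11 (n := n) (m := m) m₂, h0 ∈ E' →
        E' = {Hos11.g2 j, Hos11.g4 j, Hos11.t j}) →
      (∀ (r : Res11 n m) h', (r, h') ∈ M →
        h' ∈ ({Hos11.g2 j, Hos11.g4 j, Hos11.t j} : Finset (Hos11 n m)) → r = r0) →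
      (ppnInstance223 m₂ v occ kIdx).FeasibleCaps (move M r0 h0) := by
    intro r0 h0 _ hchar honly E hE
    rw [pp_regions] at hE
    by_cases hmem : h0 ∈ E
    · rw [hchar E hE hmem, pp_cap, cap_g]
      apply Finset.card_le_one.mpr
      intro r1 hr1 r2 hr2
      have key : ∀ r', r' ∈ assignedIn (move M r0 h0)
          ({Hos11.g2 j, Hos11.g4 j, Hos11.t j} : Finset (Hos11 n m)) → r' = r0 := by
        intro r' hr'
        rcases mem_assignedIn_move.mp hr' with ⟨rfl, _⟩ | ⟨hne, h', hmem', hm'⟩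
        · rfl
        · exact honly r' h' hm' hmem'
      rw [key r1 hr1, key r2 hr2]
    · calc (assignedIn (move M r0 h0) E).card
          ≤ (assignedIn M E).card := Finset.card_le_card (assignedIn_move_subset hmem)
        _ ≤ _ := hfeas E hE
  by_cases h12 : (Res11.g1 j, Hos11.g2 j) ∈ M
  · -- g1 is at g2; then g3 is unmatched and (g3, g2) is an SBP of type (ii)
    have hg3un : ∀ h, (Res11.g3 j, h) ∉ M := by
      intro h hm
      rcases hg3h h hm with rfl | rfl
      · rcases hnot_both with hno | hno
        · exact hno ⟨Hos11.g2 j, h12, by simp⟩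
        · exact hno ⟨Hos11.g4 j, hm, by simp⟩
      · have hsub : ({Res11.g1 j, Res11.g3 j} : Finset (Res11 n m)) ⊆ assignedTo M (Hos11.g2 j) := by
          intro r hr
          simp only [Finset.mem_insert, Finset.mem_singleton] at hr
          rcases hr with rfl | rfl
          · exact mem_assignedTo.mpr h12
          · exact mem_assignedTo.mpr hm
        have := hqcap (Hos11.g2 j)
        rw [pp_q] at this
        have h2le : 2 ≤ (assignedTo M (Hos11.g2 j)).card := by
          calc 2 = ({Res11.g1 j, Res11.g3 j} : Finset (Res11 n m)).card := by
                  rw [Finset.card_insert_of_notMem (by simp), Finset.card_singleton]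
               _ ≤ _ := Finset.card_le_card hsub
        omega
    refine hnsbp (Res11.g3 j) (Hos11.g2 j) ⟨⟨hg3un _, ⟨?_, ?_⟩, Or.inl hg3un, ?_⟩, ?_⟩
    · simp [prefRes11]
    · simp [prefHos11]
    · exact Or.inr ⟨Res11.g1 j, mem_assignedTo.mpr h12,
        listPref_pair (by simp)⟩
    · exact Or.inr ⟨Res11.g1 j, mem_assignedTo.mpr h12,
        listPref_pair (by simp)⟩
  · by_cases h14 : (Res11.g1 j, Hos11.g4 j) ∈ M
    · -- g1 is at g4; (g1, g2) is an SBP of type (i)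
      have hg3un : ∀ h, (Res11.g3 j, h) ∉ M := by
        intro h hm
        rcases hnot_both with hno | hno
        · exact hno ⟨Hos11.g4 j, h14, by simp⟩
        · rcases hg3h h hm with rfl | rfl
          · exact hno ⟨Hos11.g4 j, hm, by simp⟩
          · exact hno ⟨Hos11.g2 j, hm, by simp⟩
      have honly : ∀ (r : Res11 n m) h', (r, h') ∈ M →
          h' ∈ ({Hos11.g2 j, Hos11.g4 j, Hos11.t j} : Finset (Hos11 n m)) → r = Res11.g1 j := by
        intro r h' hm hmem
        rcases hAt r h' hm hmem with rfl | rfl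
        · rfl
        · exact absurd hm (hg3un _)
      refine hnsbp (Res11.g1 j) (Hos11.g2 j) ⟨⟨h12, ⟨?_, ?_⟩, ?_, ?_⟩, ?_⟩
      · simp [prefRes11]
      · simp [prefHos11]
      · exact Or.inr ⟨Hos11.g4 j, h14, listPref_pair (by simp)⟩
      · refine Or.inl ?_
        rw [pp_q]
        apply card_lt_one_of_empty
        intro r hm
        rcases hAt r _ hm (by simp) with rfl | rfl
        · exact h12 hm
        · exact hg3un _ hm
      · exact Or.inl (hmvfeas _ _ (by simp) (fun E' hE' hm' => region_g2 hE' hm') honly)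
    · -- g1 is unmatched
      have hg1un : ∀ h, (Res11.g1 j, h) ∉ M := by
        intro h hm
        rcases hg1h h hm with rfl | rfl
        · exact h12 hm
        · exact h14 hm
      by_cases h32 : (Res11.g3 j, Hos11.g2 j) ∈ M
      · -- (g3, g4) is an SBP of type (i)
        have honly : ∀ (r : Res11 n m) h', (r, h') ∈ M →
            h' ∈ ({Hos11.g2 j, Hos11.g4 j, Hos11.t j} : Finset (Hos11 n m)) → r = Res11.g3 j := by
          intro r h' hm hmem
          rcases hAt r h' hm hmem with rfl | rfl
          · exact absurd hm (hg1un _)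
          · rfl
        have h34 : (Res11.g3 j, Hos11.g4 j) ∉ M := by
          intro hm
          have := huniq _ _ _ h32 hm
          simp at this
        refine hnsbp (Res11.g3 j) (Hos11.g4 j) ⟨⟨h34, ⟨?_, ?_⟩, ?_, ?_⟩, ?_⟩
        · simp [prefRes11]
        · simp [prefHos11]
        · exact Or.inr ⟨Hos11.g2 j, h32, listPref_pair (by simp)⟩
        · refine Or.inl ?_
          rw [pp_q]
          apply card_lt_one_of_empty
          intro r hm
          rcases hAt r _ hm (by simp) with rfl | rfl
          · exact hg1un _ hm
          · exact h34 hm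
        · exact Or.inl (hmvfeas _ _ (by simp) (fun E' hE' hm' => region_g4 hE' hm') honly)
      · by_cases h34 : (Res11.g3 j, Hos11.g4 j) ∈ M
        · -- (g1, g4) is an SBP of type (ii)
          refine hnsbp (Res11.g1 j) (Hos11.g4 j) ⟨⟨hg1un _, ⟨?_, ?_⟩, Or.inl hg1un, ?_⟩, ?_⟩
          · simp [prefRes11]
          · simp [prefHos11]
          · exact Or.inr ⟨Res11.g3 j, mem_assignedTo.mpr h34,
              listPref_pair (by simp)⟩
          · exact Or.inr ⟨Res11.g3 j, mem_assignedTo.mpr h34,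
              listPref_pair (by simp)⟩
        · -- everyone unmatched: (g1, g2) is an SBP of type (i)
          have hg3un : ∀ h, (Res11.g3 j, h) ∉ M := by
            intro h hm
            rcases hg3h h hm with rfl | rfl
            · exact h34 hm
            · exact h32 hm
          have honly : ∀ (r : Res11 n m) h', (r, h') ∈ M →
              h' ∈ ({Hos11.g2 j, Hos11.g4 j, Hos11.t j} : Finset (Hos11 n m)) →
              r = Res11.g1 j := by
            intro r h' hm hmem
            rcases hAt r h' hm hmem with rfl | rfl
            · rfl
            · exact absurd hm (hg3un _)
          refine hnsbp (Res11.g1 j) (Hos11.g2 j) ⟨⟨hg1un _, ⟨?_, ?_⟩, Or.inl hg1un, ?_⟩, ?_⟩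
          · simp [prefRes11]
          · simp [prefHos11]
          · refine Or.inl ?_
            rw [pp_q]
            apply card_lt_one_of_empty
            intro r hm
            rcases hAt r _ hm (by simp) with rfl | rfl
            · exact hg1un _ hm
            · exact hg3un _ hm
          · exact Or.inl (hmvfeas _ _ (by simp) (fun E' hE' hm' => region_g2 hE' hm') honly)

end Forward

section Forward2

variable {n m m₂ : ℕ} {v : Fin m → Fin 3 → Fin n}
  {occ : Fin n → Fin 3 → Fin m × Fin 3} {kIdx : Fin m → Fin 3 → Fin 3}
  {M : Finset (Res11 n m × Hos11 n m)}

/-- In any strongly stable matching, the last `a` hospital of each clause gadget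
is occupied. -/
lemma L_y (hM : (ppnInstance223 m₂ v occ kIdx).IsStronglyStable M) (j : Fin m) :
    ((j : ℕ) < m₂ ∧ ∃ l : Fin 3, (l : ℕ) < 2 ∧ (Res11.c j l, Hos11.a j 0) ∈ M) ∨
    (¬ (j : ℕ) < m₂ ∧
      ((Res11.d j, Hos11.a j 2) ∈ M ∨ (Res11.c j 2, Hos11.a j 2) ∈ M)) := by
  have hzt := L_zt hM j
  obtain ⟨⟨hacc, huniq, hqcap⟩, hfeas, hnsbp⟩ := hM
  have hzy : (Res11.z j, Hos11.y j) ∉ M := by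
    intro hm
    have := huniq _ _ _ hm hzt
    simp at this
  have hyemp : ∀ r, (r, Hos11.y j) ∉ M := by
    intro r hm
    have h2 := (hacc _ hm).2
    simp only [pp_prefH, prefHos11, List.mem_singleton] at h2
    exact hzy (h2 ▸ hm)
  have hblock : (ppnInstance223 m₂ v occ kIdx).IsBlockingPair M (Res11.z j) (Hos11.y j) := by
    refine ⟨hzy, ⟨?_, ?_⟩, ?_, ?_⟩
    · simp [prefRes11]
    · simp [prefHos11]
    · exact Or.inr ⟨Hos11.t j, hzt, listPref_pair (by simp)⟩
    · refine Or.inl ?_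
      rw [pp_q]
      exact card_lt_one_of_empty hyemp
  have hnfeas : ¬ (ppnInstance223 m₂ v occ kIdx).FeasibleCaps
      (HRRC.move M (Res11.z j) (Hos11.y j)) := by
    intro hf
    refine hnsbp (Res11.z j) (Hos11.y j) ⟨hblock, Or.inl hf⟩
  obtain ⟨E, hE, hyE, hviol⟩ := violated_region hfeas hnfeas
  rw [pp_regions] at hE
  rcases region_y hE hyE with ⟨hj, rfl⟩ | ⟨hj, rfl⟩
  · -- 2-clause
    left
    refine ⟨hj, ?_⟩
    rw [pp_cap, cap_ay] at hviol
    obtain ⟨r1, hr1, r2, hr2, hne⟩ := Finset.one_lt_card.mp hviol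
    have key : ∀ r', r' ∈ assignedIn (HRRC.move M (Res11.z j) (Hos11.y j))
        ({Hos11.a j 0, Hos11.y j} : Finset (Hos11 n m)) → r' ≠ Res11.z j →
        ∃ l : Fin 3, (l : ℕ) < 2 ∧ (Res11.c j l, Hos11.a j 0) ∈ M := by
      intro r' hr' hrne
      rcases mem_assignedIn_move.mp hr' with ⟨rfl, _⟩ | ⟨_, h', hmem', hm'⟩
      · exact absurd rfl hrne
      · simp only [Finset.mem_insert, Finset.mem_singleton] at hmem'
        rcases hmem' with rfl | rfl
        · have h2 := (hacc _ hm').2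
          simp [prefHos11] at h2
          rcases h2 with rfl | rfl
          · exact ⟨0, by norm_num, hm'⟩
          · exact ⟨1, by norm_num, hm'⟩
        · exact absurd hm' (hyemp _)
    by_cases h1z : r1 = Res11.z j
    · refine key r2 hr2 ?_
      rw [h1z] at hne
      exact fun h => hne (h ▸ rfl)
    · exact key r1 hr1 h1z
  · -- 3-clause
    right
    refine ⟨hj, ?_⟩
    rw [pp_cap, cap_ay] at hviol
    obtain ⟨r1, hr1, r2, hr2, hne⟩ := Finset.one_lt_card.mp hviol
    have key : ∀ r', r' ∈ assignedIn (HRRC.move M (Res11.z j) (Hos11.y j))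
        ({Hos11.a j 2, Hos11.y j} : Finset (Hos11 n m)) → r' ≠ Res11.z j →
        (Res11.d j, Hos11.a j 2) ∈ M ∨ (Res11.c j 2, Hos11.a j 2) ∈ M := by
      intro r' hr' hrne
      rcases mem_assignedIn_move.mp hr' with ⟨rfl, _⟩ | ⟨_, h', hmem', hm'⟩
      · exact absurd rfl hrne
      · simp only [Finset.mem_insert, Finset.mem_singleton] at hmem'
        rcases hmem' with rfl | rfl
        · have h2 := (hacc _ hm').2
          simp [prefHos11, hj] at h2
          rcases h2 with rfl | rfl
          · exact Or.inl hm'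
          · exact Or.inr hm'
        · exact absurd hm' (hyemp _)
    by_cases h1z : r1 = Res11.z j
    · refine key r2 hr2 ?_
      rw [h1z] at hne
      exact fun h => hne (h ▸ rfl)
    · exact key r1 hr1 h1z

/-- If `d j` occupies `a j 2`, then `a j 0` is occupied by one of the `c`s. -/
lemma L_d (hM : (ppnInstance223 m₂ v occ kIdx).IsStronglyStable M) (j : Fin m)
    (hj : ¬ (j : ℕ) < m₂) (hd : (Res11.d j, Hos11.a j 2) ∈ M) :
    ∃ l : Fin 3, (l : ℕ) < 2 ∧ (Res11.c j l, Hos11.a j 0) ∈ M := by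
  obtain ⟨⟨hacc, huniq, hqcap⟩, hfeas, hnsbp⟩ := hM
  have hd1 : (Res11.d j, Hos11.a j 1) ∉ M := by
    intro hm
    have := huniq _ _ _ hm hd
    simp only [Hos11.a.injEq] at this
    exact absurd this.2 (by decide)
  have ha1emp : ∀ r, (r, Hos11.a j 1) ∉ M := by
    intro r hm
    have h2 := (hacc _ hm).2
    simp [prefHos11, hj] at h2
    exact hd1 (h2 ▸ hm)
  have hblock : (ppnInstance223 m₂ v occ kIdx).IsBlockingPair M (Res11.d j) (Hos11.a j 1) := by
    refine ⟨hd1, ⟨?_, ?_⟩, ?_, ?_⟩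
    · simp only [pp_prefR, prefRes11]
      rw [if_neg hj]
      simp
    · simp [prefHos11, hj]
    · refine Or.inr ⟨Hos11.a j 2, hd, ?_⟩
      simp only [pp_prefR, prefRes11]
      rw [if_neg hj]
      exact listPref_pair (by simp only [ne_eq, Hos11.a.injEq]; exact fun h => absurd h.2 (by decide))
    · refine Or.inl ?_
      rw [pp_q]
      exact card_lt_one_of_empty ha1emp
  have hnfeas : ¬ (ppnInstance223 m₂ v occ kIdx).FeasibleCaps
      (HRRC.move M (Res11.d j) (Hos11.a j 1)) := by
    intro hf
    exact hnsbp (Res11.d j) (Hos11.a j 1) ⟨hblock, Or.inl hf⟩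
  obtain ⟨E, hE, haE, hviol⟩ := violated_region hfeas hnfeas
  rw [pp_regions] at hE
  obtain ⟨-, rfl⟩ := region_a1 hE haE
  rw [pp_cap, cap_aa] at hviol
  obtain ⟨r1, hr1, r2, hr2, hne⟩ := Finset.one_lt_card.mp hviol
  have key : ∀ r', r' ∈ assignedIn (HRRC.move M (Res11.d j) (Hos11.a j 1))
      ({Hos11.a j 0, Hos11.a j 1} : Finset (Hos11 n m)) → r' ≠ Res11.d j →
      ∃ l : Fin 3, (l : ℕ) < 2 ∧ (Res11.c j l, Hos11.a j 0) ∈ M := by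
    intro r' hr' hrne
    rcases mem_assignedIn_move.mp hr' with ⟨rfl, _⟩ | ⟨_, h', hmem', hm'⟩
    · exact absurd rfl hrne
    · simp only [Finset.mem_insert, Finset.mem_singleton] at hmem'
      rcases hmem' with rfl | rfl
      · have h2 := (hacc _ hm').2
        simp [prefHos11] at h2
        rcases h2 with rfl | rfl
        · exact ⟨0, by norm_num, hm'⟩
        · exact ⟨1, by norm_num, hm'⟩
      · have h2 := (hacc _ hm').2
        simp [prefHos11, hj] at h2
        exact absurd h2 hrne
  by_cases h1d : r1 = Res11.d j
  · refine key r2 hr2 ?_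
    rw [h1d] at hne
    exact fun h => hne (h ▸ rfl)
  · exact key r1 hr1 h1d

end Forward2

/-- The assignment extracted from a matching. -/
def aM {n m : ℕ} (M : Finset (Res11 n m × Hos11 n m)) : Fin n → Bool :=
  fun i => decide ((Res11.e i 0, Hos11.b i 0) ∈ M ∨ (Res11.e i 1, Hos11.b i 1) ∈ M)

section Forward3

variable {n m m₂ : ℕ} {v : Fin m → Fin 3 → Fin n} {pol : Fin m → Fin 3 → Bool}
  {occ : Fin n → Fin 3 → Fin m × Fin 3} {kIdx : Fin m → Fin 3 → Fin 3}
  {M : Finset (Res11 n m × Hos11 n m)}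

/-- If a `c` resident occupies its `a` hospital, the corresponding literal is true
under the extracted assignment. -/
lemma L_block
    (hkIdx : ∀ (j : Fin m) (l : Fin 3), (l : ℕ) < (if (j : ℕ) < m₂ then 2 else 3) →
      occ (v j l) (kIdx j l) = (j, l))
    (hoccPol : ∀ i k, pol (occ i k).1 (occ i k).2 = decide ((k : ℕ) < 2))
    (hM : (ppnInstance223 m₂ v occ kIdx).IsStronglyStable M) (j : Fin m) (l : Fin 3)
    (hl : (l : ℕ) < (if (j : ℕ) < m₂ then 2 else 3))
    (hc : (Res11.c j l,
      if (l : ℕ) < 2 then Hos11.a j 0 else Hos11.a j 2) ∈ M) :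
    (if pol j l then aM M (v j l) else !(aM M (v j l))) = true := by
  obtain ⟨⟨hacc, huniq, hqcap⟩, hfeas, hnsbp⟩ := hM
  set i := v j l with hidef
  set k := kIdx j l with hkdef
  have hocc : occ i k = (j, l) := hkIdx j l hl
  have hpol : pol j l = decide ((k : ℕ) < 2) := by
    have := hoccPol i k
    rwa [hocc] at this
  set ha : Hos11 n m := if (l : ℕ) < 2 then Hos11.a j 0 else Hos11.a j 2 with hha
  have hne_xa : Hos11.x i k ≠ ha := by rw [hha]; split <;> simp
  have hprefR : prefRes11 m₂ v kIdx (Res11.c j l) = [Hos11.x i k, ha] := by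
    by_cases hl2 : (l : ℕ) < 2
    · simp [prefRes11, hl2, hha, hidef, hkdef]
    · have hj3 : ¬ (j : ℕ) < m₂ := by
        intro hjj
        rw [if_pos hjj] at hl
        omega
      simp [prefRes11, hl2, hj3, hha, hidef, hkdef]
  have hxemp : ∀ r, (r, Hos11.x i k) ∉ M := by
    intro r hm
    have h2 := (hacc _ hm).2
    simp only [pp_prefH, prefHos11, hocc, List.mem_singleton] at h2
    subst h2
    exact hne_xa (huniq _ _ _ hm hc)
  have hblock : (ppnInstance223 m₂ v occ kIdx).IsBlockingPair M (Res11.c j l)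
      (Hos11.x i k) := by
    refine ⟨hxemp _, ⟨?_, ?_⟩, ?_, ?_⟩
    · rw [pp_prefR, hprefR]; simp
    · simp [prefHos11, hocc]
    · exact Or.inr ⟨ha, hc, by rw [pp_prefR, hprefR]; exact listPref_pair hne_xa⟩
    · exact Or.inl (by rw [pp_q]; exact card_lt_one_of_empty hxemp)
  have hnfeas : ¬ (ppnInstance223 m₂ v occ kIdx).FeasibleCaps
      (HRRC.move M (Res11.c j l) (Hos11.x i k)) := fun hf =>
    hnsbp _ _ ⟨hblock, Or.inl hf⟩
  obtain ⟨E, hE, hxE, hviol⟩ := violated_region hfeas hnfeas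
  rw [pp_regions] at hE
  rw [pp_cap] at hviol
  have hk3 : (k : ℕ) = 0 ∨ (k : ℕ) = 1 ∨ (k : ℕ) = 2 := by omega
  rcases hk3 with hk | hk | hk
  · -- first positive occurrence
    have hkk : k = 0 := Fin.ext hk
    rw [hkk] at hxE hviol
    rw [region_x0 hE hxE] at hviol
    rw [cap_bx0] at hviol
    obtain ⟨r1, hr1, r2, hr2, hne⟩ := Finset.one_lt_card.mp hviol
    have key : ∀ r', r' ∈ assignedIn (HRRC.move M (Res11.c j l) (Hos11.x i 0))
        ({Hos11.b i 0, Hos11.x i 0} : Finset (Hos11 n m)) → r' ≠ Res11.c j l →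
        (Res11.e i 0, Hos11.b i 0) ∈ M := by
      intro r' hr' hrne
      rcases mem_assignedIn_move.mp hr' with ⟨rfl, _⟩ | ⟨_, h', hmem', hm'⟩
      · exact absurd rfl hrne
      · simp only [Finset.mem_insert, Finset.mem_singleton] at hmem'
        rcases hmem' with rfl | rfl
        · have h2 := (hacc _ hm').2
          simp [prefHos11] at h2
          subst h2
          exact hm'
        · have h2 := (hacc _ hm').2
          simp only [pp_prefH, prefHos11, ← hkk, hocc, List.mem_singleton] at h2
          exact absurd h2 hrne
    have he : (Res11.e i 0, Hos11.b i 0) ∈ M := by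
      by_cases h1c : r1 = Res11.c j l
      · refine key r2 hr2 ?_
        rw [h1c] at hne
        exact fun h => hne (h ▸ rfl)
      · exact key r1 hr1 h1c
    have hT : aM M i = true := by simp [aM, he]
    rw [hpol, hkk]
    simp [hT]
  · -- second positive occurrence
    have hkk : k = 1 := Fin.ext hk
    rw [hkk] at hxE hviol
    rw [region_x1 hE hxE] at hviol
    rw [cap_bx1] at hviol
    obtain ⟨r1, hr1, r2, hr2, hne⟩ := Finset.one_lt_card.mp hviol
    have key : ∀ r', r' ∈ assignedIn (HRRC.move M (Res11.c j l) (Hos11.x i 1))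
        ({Hos11.b i 1, Hos11.x i 1} : Finset (Hos11 n m)) → r' ≠ Res11.c j l →
        (Res11.e i 1, Hos11.b i 1) ∈ M := by
      intro r' hr' hrne
      rcases mem_assignedIn_move.mp hr' with ⟨rfl, _⟩ | ⟨_, h', hmem', hm'⟩
      · exact absurd rfl hrne
      · simp only [Finset.mem_insert, Finset.mem_singleton] at hmem'
        rcases hmem' with rfl | rfl
        · have h2 := (hacc _ hm').2
          simp [prefHos11] at h2
          subst h2
          exact hm'
        · have h2 := (hacc _ hm').2
          simp only [pp_prefH, prefHos11, ← hkk, hocc, List.mem_singleton] at h2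
          exact absurd h2 hrne
    have he : (Res11.e i 1, Hos11.b i 1) ∈ M := by
      by_cases h1c : r1 = Res11.c j l
      · refine key r2 hr2 ?_
        rw [h1c] at hne
        exact fun h => hne (h ▸ rfl)
      · exact key r1 hr1 h1c
    have hT : aM M i = true := by simp [aM, he]
    rw [hpol, hkk]
    simp [hT]
  · -- negative occurrence
    have hkk : k = 2 := Fin.ext hk
    rw [hkk] at hxE hviol
    rw [region_x2 hE hxE] at hviol
    rw [cap_bx2] at hviol
    have hsub : assignedIn (HRRC.move M (Res11.c j l) (Hos11.x i 2))
        ({Hos11.b i 2, Hos11.b i 3, Hos11.x i 2} : Finset (Hos11 n m)) ⊆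
        ({Res11.e i 0, Res11.e i 1, Res11.c j l} : Finset (Res11 n m)) := by
      intro r' hr'
      rcases mem_assignedIn_move.mp hr' with ⟨rfl, _⟩ | ⟨hrne, h', hmem', hm'⟩
      · simp
      · simp only [Finset.mem_insert, Finset.mem_singleton] at hmem'
        rcases hmem' with rfl | rfl | rfl
        · have h2 := (hacc _ hm').2
          simp [prefHos11] at h2
          simp [h2]
        · have h2 := (hacc _ hm').2
          simp [prefHos11] at h2
          simp [h2]
        · have h2 := (hacc _ hm').2
          simp only [pp_prefH, prefHos11, ← hkk, hocc, List.mem_singleton] at h2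
          simp [h2]
    have hcard3 : ({Res11.e i 0, Res11.e i 1, Res11.c j l} : Finset (Res11 n m)).card ≤ 3 := by
      apply le_trans (Finset.card_insert_le _ _)
      apply Nat.succ_le_succ
      apply le_trans (Finset.card_insert_le _ _)
      simp
    have heq : assignedIn (HRRC.move M (Res11.c j l) (Hos11.x i 2))
        ({Hos11.b i 2, Hos11.b i 3, Hos11.x i 2} : Finset (Hos11 n m)) =
        ({Res11.e i 0, Res11.e i 1, Res11.c j l} : Finset (Res11 n m)) :=
      Finset.eq_of_subset_of_card_le hsub (by omega)
    have hge : ∀ r₀ : Res11 n m, r₀ ∈ ({Res11.e i 0, Res11.e i 1, Res11.c j l} :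
        Finset (Res11 n m)) → r₀ ≠ Res11.c j l →
        ∃ h' ∈ ({Hos11.b i 2, Hos11.b i 3, Hos11.x i 2} : Finset (Hos11 n m)),
          (r₀, h') ∈ M := by
      intro r₀ hr₀ hrne
      rw [← heq] at hr₀
      rcases mem_assignedIn_move.mp hr₀ with ⟨rfl, _⟩ | ⟨_, h', hmem', hm'⟩
      · exact absurd rfl hrne
      · exact ⟨h', hmem', hm'⟩
    obtain ⟨h0, hmem0, hm0⟩ := hge (Res11.e i 0) (by simp) (by simp)
    obtain ⟨h1, hmem1, hm1⟩ := hge (Res11.e i 1) (by simp) (by simp)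
    have hb2 : (Res11.e i 0, Hos11.b i 2) ∈ M := by
      have hp := (hacc _ hm0).1
      simp [prefRes11] at hp
      simp only [Finset.mem_insert, Finset.mem_singleton] at hmem0
      rcases hp with rfl | rfl
      · rcases hmem0 with h | h | h
        · simp only [Hos11.b.injEq] at h
          exact absurd h.2 (by decide)
        · simp only [Hos11.b.injEq] at h
          exact absurd h.2 (by decide)
        · exact absurd h (by simp)
      · exact hm0
    have hb3 : (Res11.e i 1, Hos11.b i 3) ∈ M := by
      have hp := (hacc _ hm1).1
      simp [prefRes11] at hp
      simp only [Finset.mem_insert, Finset.mem_singleton] at hmem1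
      rcases hp with rfl | rfl
      · rcases hmem1 with h | h | h
        · simp only [Hos11.b.injEq] at h
          exact absurd h.2 (by decide)
        · simp only [Hos11.b.injEq] at h
          exact absurd h.2 (by decide)
        · exact absurd h (by simp)
      · exact hm1
    have hno0 : (Res11.e i 0, Hos11.b i 0) ∉ M := by
      intro hm
      have := huniq _ _ _ hm hb2
      simp only [Hos11.b.injEq] at this
      exact absurd this.2 (by decide)
    have hno1 : (Res11.e i 1, Hos11.b i 1) ∉ M := by
      intro hm
      have := huniq _ _ _ hm hb3
      simp only [Hos11.b.injEq] at this
      exact absurd this.2 (by decide)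
    have hF : aM M i = false := by simp [aM, hno0, hno1]
    rw [hpol, hkk]
    simp [hF]

/-- Forward direction of the reduction. -/
lemma forward_sat
    (hkIdx : ∀ (j : Fin m) (l : Fin 3), (l : ℕ) < (if (j : ℕ) < m₂ then 2 else 3) →
      occ (v j l) (kIdx j l) = (j, l))
    (hoccPol : ∀ i k, pol (occ i k).1 (occ i k).2 = decide ((k : ℕ) < 2))
    (hM : (ppnInstance223 m₂ v occ kIdx).IsStronglyStable M) :
    ∀ j : Fin m, ∃ l : Fin 3,
      (l : ℕ) < (if (j : ℕ) < m₂ then 2 else 3) ∧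
      (if pol j l then aM M (v j l) else !(aM M (v j l))) = true := by
  intro j
  rcases L_y hM j with ⟨hj, l, hl2, hc⟩ | ⟨hj, hdc⟩
  · exact ⟨l, by rw [if_pos hj]; exact hl2,
      L_block hkIdx hoccPol hM j l (by rw [if_pos hj]; exact hl2)
        (by rw [if_pos hl2]; exact hc)⟩
  · rcases hdc with hd | hc2
    · obtain ⟨l, hl2, hc⟩ := L_d hM j hj hd
      exact ⟨l, by rw [if_neg hj]; omega,
        L_block hkIdx hoccPol hM j l (by rw [if_neg hj]; omega)
          (by rw [if_pos hl2]; exact hc)⟩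
    · exact ⟨2, by rw [if_neg hj]; norm_num,
        L_block hkIdx hoccPol hM j 2 (by rw [if_neg hj]; norm_num)
          (by rw [if_neg (by norm_num)]; exact hc2)⟩

end Forward3

/-! ### Backward direction: building a strongly stable matching from an assignment -/

section BackwardDefs

variable {n m : ℕ} (m₂ : ℕ) (v : Fin m → Fin 3 → Fin n) (pol : Fin m → Fin 3 → Bool)
  (kIdx : Fin m → Fin 3 → Fin 3) (a : Fin n → Bool)

/-- Truth value of the `l`-th literal of clause `j`. -/
def litB (j : Fin m) (l : Fin 3) : Bool := if pol j l then a (v j l) else !(a (v j l))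

/-- The selected true literal of clause `j` (the first one, when the clause is
satisfied). -/
def selB (j : Fin m) : Fin 3 :=
  if litB v pol a j 0 then 0 else if litB v pol a j 1 then 1 else 2

/-- The matching built from an assignment, as a function. -/
def fM : Res11 n m → Option (Hos11 n m)
  | .e i t =>
      some (if (t : ℕ) = 0 then (if a i then .b i 0 else .b i 2)
            else (if a i then .b i 1 else .b i 3))
  | .c j l =>
      if (l : ℕ) < (if (j : ℕ) < m₂ then 2 else 3) then
        (if litB v pol a j l then
          (if selB v pol a j = l then
            some (if (l : ℕ) < 2 then .a j 0 else .a j 2)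
          else none)
        else some (.x (v j l) (kIdx j l)))
      else none
  | .d j =>
      if (j : ℕ) < m₂ then none
      else some (if (selB v pol a j : ℕ) < 2 then .a j 2 else .a j 1)
  | .g1 _ => none
  | .g3 _ => none
  | .z j => some (.t j)

/-- The matching built from an assignment. -/
noncomputable def MB : Finset (Res11 n m × Hos11 n m) :=
  Finset.univ.filter fun p => fM m₂ v pol kIdx a p.1 = some p.2

variable {m₂ v pol kIdx a}

lemma mem_MB {p : Res11 n m × Hos11 n m} :
    p ∈ MB m₂ v pol kIdx a ↔ fM m₂ v pol kIdx a p.1 = some p.2 := by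
  simp [MB]

/-! Inversion lemmas for `fM`. -/

lemma fM_inv_b {r : Res11 n m} {i : Fin n} {t : Fin 4}
    (hr : fM m₂ v pol kIdx a r = some (Hos11.b i t)) :
    (t = 0 ∧ r = Res11.e i 0 ∧ a i = true) ∨
    (t = 2 ∧ r = Res11.e i 0 ∧ a i = false) ∨
    (t = 1 ∧ r = Res11.e i 1 ∧ a i = true) ∨
    (t = 3 ∧ r = Res11.e i 1 ∧ a i = false) := by
  cases r with
  | e i' t' =>
    simp only [fM, Option.some.injEq] at hr
    by_cases ht : (t' : ℕ) = 0
    · have ht' : t' = 0 := Fin.ext ht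
      rw [if_pos ht] at hr
      by_cases hai : a i' = true
      · rw [if_pos hai] at hr
        simp only [Hos11.b.injEq] at hr
        obtain ⟨rfl, rfl⟩ := hr
        exact Or.inl ⟨rfl, by rw [ht'], hai⟩
      · rw [if_neg hai] at hr
        simp only [Hos11.b.injEq] at hr
        obtain ⟨rfl, rfl⟩ := hr
        exact Or.inr (Or.inl ⟨rfl, by rw [ht'], by simpa using hai⟩)
    · have ht' : t' = 1 := Fin.ext (by omega)
      rw [if_neg ht] at hr
      by_cases hai : a i' = true
      · rw [if_pos hai] at hr
        simp only [Hos11.b.injEq] at hr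
        obtain ⟨rfl, rfl⟩ := hr
        exact Or.inr (Or.inr (Or.inl ⟨rfl, by rw [ht'], hai⟩))
      · rw [if_neg hai] at hr
        simp only [Hos11.b.injEq] at hr
        obtain ⟨rfl, rfl⟩ := hr
        exact Or.inr (Or.inr (Or.inr ⟨rfl, by rw [ht'], by simpa using hai⟩))
  | c j' l' =>
    simp only [fM] at hr
    by_cases h1 : (l' : ℕ) < (if (j' : ℕ) < m₂ then 2 else 3)
    · rw [if_pos h1] at hr
      by_cases h2 : litB v pol a j' l' = true
      · rw [if_pos h2] at hr
        by_cases h3 : selB v pol a j' = l'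
        · rw [if_pos h3] at hr
          revert hr
          split <;> simp
        · rw [if_neg h3] at hr
          exact absurd hr (by simp)
      · rw [if_neg h2] at hr
        exact absurd hr (by simp)
    · rw [if_neg h1] at hr
      exact absurd hr (by simp)
  | d j' =>
    simp only [fM] at hr
    by_cases h1 : (j' : ℕ) < m₂
    · rw [if_pos h1] at hr
      exact absurd hr (by simp)
    · rw [if_neg h1] at hr
      revert hr
      split <;> simp
  | g1 j' => exact absurd hr (by simp [fM])
  | g3 j' => exact absurd hr (by simp [fM])
  | z j' => exact absurd hr (by simp [fM])

lemma fM_inv_x {r : Res11 n m} {i : Fin n} {k : Fin 3}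
    (hr : fM m₂ v pol kIdx a r = some (Hos11.x i k)) :
    ∃ j l, r = Res11.c j l ∧ v j l = i ∧ kIdx j l = k ∧
      (l : ℕ) < (if (j : ℕ) < m₂ then 2 else 3) ∧ litB v pol a j l = false := by
  cases r with
  | e i' t' =>
    simp only [fM, Option.some.injEq] at hr
    revert hr
    split <;> split <;> simp
  | c j' l' =>
    simp only [fM] at hr
    by_cases h1 : (l' : ℕ) < (if (j' : ℕ) < m₂ then 2 else 3)
    · rw [if_pos h1] at hr
      by_cases h2 : litB v pol a j' l' = true
      · rw [if_pos h2] at hr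
        by_cases h3 : selB v pol a j' = l'
        · rw [if_pos h3] at hr
          revert hr
          split <;> simp
        · rw [if_neg h3] at hr
          exact absurd hr (by simp)
      · rw [if_neg h2] at hr
        simp only [Option.some.injEq, Hos11.x.injEq] at hr
        exact ⟨j', l', rfl, hr.1, hr.2, h1, by simpa using h2⟩
    · rw [if_neg h1] at hr
      exact absurd hr (by simp)
  | d j' =>
    simp only [fM] at hr
    by_cases h1 : (j' : ℕ) < m₂
    · rw [if_pos h1] at hr
      exact absurd hr (by simp)
    · rw [if_neg h1] at hr
      revert hr
      split <;> simp
  | g1 j' => exact absurd hr (by simp [fM])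
  | g3 j' => exact absurd hr (by simp [fM])
  | z j' => exact absurd hr (by simp [fM])

lemma fM_inv_a0 {r : Res11 n m} {j : Fin m}
    (hr : fM m₂ v pol kIdx a r = some (Hos11.a j 0)) :
    r = Res11.c j (selB v pol a j) ∧ (selB v pol a j : ℕ) < 2 ∧
      litB v pol a j (selB v pol a j) = true := by
  cases r with
  | e i' t' =>
    simp only [fM, Option.some.injEq] at hr
    revert hr
    split <;> split <;> simp
  | c j' l' =>
    simp only [fM] at hr
    by_cases h1 : (l' : ℕ) < (if (j' : ℕ) < m₂ then 2 else 3)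
    · rw [if_pos h1] at hr
      by_cases h2 : litB v pol a j' l' = true
      · rw [if_pos h2] at hr
        by_cases h3 : selB v pol a j' = l'
        · rw [if_pos h3] at hr
          by_cases h4 : (l' : ℕ) < 2
          · rw [if_pos h4] at hr
            simp only [Option.some.injEq, Hos11.a.injEq] at hr
            obtain ⟨rfl, -⟩ := hr
            exact ⟨by rw [h3], h3 ▸ h4, h3 ▸ h2⟩
          · rw [if_neg h4] at hr
            simp only [Option.some.injEq, Hos11.a.injEq] at hr
            exact absurd hr.2 (by decide)
        · rw [if_neg h3] at hr
          exact absurd hr (by simp)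
      · rw [if_neg h2] at hr
        exact absurd hr (by simp)
    · rw [if_neg h1] at hr
      exact absurd hr (by simp)
  | d j' =>
    simp only [fM] at hr
    by_cases h1 : (j' : ℕ) < m₂
    · rw [if_pos h1] at hr
      exact absurd hr (by simp)
    · rw [if_neg h1] at hr
      by_cases h2 : (selB v pol a j' : ℕ) < 2
      · rw [if_pos h2] at hr
        simp only [Option.some.injEq, Hos11.a.injEq] at hr
        exact absurd hr.2 (by decide)
      · rw [if_neg h2] at hr
        simp only [Option.some.injEq, Hos11.a.injEq] at hr
        exact absurd hr.2 (by decide)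
  | g1 j' => exact absurd hr (by simp [fM])
  | g3 j' => exact absurd hr (by simp [fM])
  | z j' => exact absurd hr (by simp [fM])

lemma fM_inv_a1 {r : Res11 n m} {j : Fin m}
    (hr : fM m₂ v pol kIdx a r = some (Hos11.a j 1)) :
    r = Res11.d j ∧ ¬ (selB v pol a j : ℕ) < 2 ∧ ¬ (j : ℕ) < m₂ := by
  cases r with
  | e i' t' =>
    simp only [fM, Option.some.injEq] at hr
    revert hr
    split <;> split <;> simp
  | c j' l' =>
    simp only [fM] at hr
    by_cases h1 : (l' : ℕ) < (if (j' : ℕ) < m₂ then 2 else 3)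
    · rw [if_pos h1] at hr
      by_cases h2 : litB v pol a j' l' = true
      · rw [if_pos h2] at hr
        by_cases h3 : selB v pol a j' = l'
        · rw [if_pos h3] at hr
          by_cases h4 : (l' : ℕ) < 2
          · rw [if_pos h4] at hr
            simp only [Option.some.injEq, Hos11.a.injEq] at hr
            exact absurd hr.2 (by decide)
          · rw [if_neg h4] at hr
            simp only [Option.some.injEq, Hos11.a.injEq] at hr
            exact absurd hr.2 (by decide)
        · rw [if_neg h3] at hr
          exact absurd hr (by simp)
      · rw [if_neg h2] at hr
        exact absurd hr (by simp)
    · rw [if_neg h1] at hr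
      exact absurd hr (by simp)
  | d j' =>
    simp only [fM] at hr
    by_cases h1 : (j' : ℕ) < m₂
    · rw [if_pos h1] at hr
      exact absurd hr (by simp)
    · rw [if_neg h1] at hr
      by_cases h2 : (selB v pol a j' : ℕ) < 2
      · rw [if_pos h2] at hr
        simp only [Option.some.injEq, Hos11.a.injEq] at hr
        exact absurd hr.2 (by decide)
      · rw [if_neg h2] at hr
        simp only [Option.some.injEq, Hos11.a.injEq] at hr
        obtain ⟨rfl, -⟩ := hr
        exact ⟨rfl, h2, h1⟩
  | g1 j' => exact absurd hr (by simp [fM])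
  | g3 j' => exact absurd hr (by simp [fM])
  | z j' => exact absurd hr (by simp [fM])

lemma fM_inv_a2 {r : Res11 n m} {j : Fin m}
    (hr : fM m₂ v pol kIdx a r = some (Hos11.a j 2)) :
    ¬ (j : ℕ) < m₂ ∧
      ((r = Res11.d j ∧ (selB v pol a j : ℕ) < 2) ∨
       (r = Res11.c j 2 ∧ selB v pol a j = 2 ∧ litB v pol a j 2 = true)) := by
  cases r with
  | e i' t' =>
    simp only [fM, Option.some.injEq] at hr
    revert hr
    split <;> split <;> simp
  | c j' l' =>
    simp only [fM] at hr
    by_cases h1 : (l' : ℕ) < (if (j' : ℕ) < m₂ then 2 else 3)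
    · rw [if_pos h1] at hr
      by_cases h2 : litB v pol a j' l' = true
      · rw [if_pos h2] at hr
        by_cases h3 : selB v pol a j' = l'
        · rw [if_pos h3] at hr
          by_cases h4 : (l' : ℕ) < 2
          · rw [if_pos h4] at hr
            simp only [Option.some.injEq, Hos11.a.injEq] at hr
            exact absurd hr.2 (by decide)
          · rw [if_neg h4] at hr
            simp only [Option.some.injEq, Hos11.a.injEq] at hr
            obtain ⟨hjj, -⟩ := hr
            subst hjj
            have hjm : ¬ (j' : ℕ) < m₂ := by
              intro hj
              rw [if_pos hj] at h1
              omega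
            have hl2 : l' = 2 := by
              apply Fin.ext
              rw [if_neg hjm] at h1
              omega
            subst hl2
            exact ⟨hjm, Or.inr ⟨rfl, h3, h2⟩⟩
            
        · rw [if_neg h3] at hr
          exact absurd hr (by simp)
      · rw [if_neg h2] at hr
        exact absurd hr (by simp)
    · rw [if_neg h1] at hr
      exact absurd hr (by simp)
  | d j' =>
    simp only [fM] at hr
    by_cases h1 : (j' : ℕ) < m₂
    · rw [if_pos h1] at hr
      exact absurd hr (by simp)
    · rw [if_neg h1] at hr
      by_cases h2 : (selB v pol a j' : ℕ) < 2
      · rw [if_pos h2] at hr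
        simp only [Option.some.injEq, Hos11.a.injEq] at hr
        obtain ⟨rfl, -⟩ := hr
        exact ⟨h1, Or.inl ⟨rfl, h2⟩⟩
      · rw [if_neg h2] at hr
        simp only [Option.some.injEq, Hos11.a.injEq] at hr
        exact absurd hr.2 (by decide)
  | g1 j' => exact absurd hr (by simp [fM])
  | g3 j' => exact absurd hr (by simp [fM])
  | z j' => exact absurd hr (by simp [fM])

lemma fM_inv_y {r : Res11 n m} {j : Fin m} :
    fM m₂ v pol kIdx a r ≠ some (Hos11.y j) := by
  cases r <;> simp only [fM] <;> (try split_ifs) <;> simp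


lemma fM_inv_g2 {r : Res11 n m} {j : Fin m} :
    fM m₂ v pol kIdx a r ≠ some (Hos11.g2 j) := by
  cases r <;> simp only [fM] <;> (try split_ifs) <;> simp


lemma fM_inv_g4 {r : Res11 n m} {j : Fin m} :
    fM m₂ v pol kIdx a r ≠ some (Hos11.g4 j) := by
  cases r <;> simp only [fM] <;> (try split_ifs) <;> simp


lemma fM_inv_t {r : Res11 n m} {j : Fin m}
    (hr : fM m₂ v pol kIdx a r = some (Hos11.t j)) : r = Res11.z j := by
  cases r <;> simp only [fM] at hr <;> (try split_ifs at hr) <;> simp_all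

end BackwardDefs

section Backward2

variable {n m m₂ : ℕ} {v : Fin m → Fin 3 → Fin n} {pol : Fin m → Fin 3 → Bool}
  {occ : Fin n → Fin 3 → Fin m × Fin 3} {kIdx : Fin m → Fin 3 → Fin 3} {a : Fin n → Bool}

lemma litB_occ (hoccVar : ∀ i k, v (occ i k).1 (occ i k).2 = i)
    (hoccPol : ∀ i k, pol (occ i k).1 (occ i k).2 = decide ((k : ℕ) < 2))
    (i : Fin n) (k : Fin 3) :
    litB v pol a (occ i k).1 (occ i k).2 = (if (k : ℕ) < 2 then a i else !(a i)) := by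
  unfold litB
  rw [hoccPol i k, hoccVar i k]
  by_cases hk : (k : ℕ) < 2 <;> simp [hk]

lemma kIdx_occ
    (hoccValid : ∀ i k, ((occ i k).2 : ℕ) < (if ((occ i k).1 : ℕ) < m₂ then 2 else 3))
    (hoccVar : ∀ i k, v (occ i k).1 (occ i k).2 = i)
    (hoccInj : ∀ i, Function.Injective (occ i))
    (hkIdx : ∀ (j : Fin m) (l : Fin 3), (l : ℕ) < (if (j : ℕ) < m₂ then 2 else 3) →
      occ (v j l) (kIdx j l) = (j, l))
    (i : Fin n) (k : Fin 3) : kIdx (occ i k).1 (occ i k).2 = k := by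
  have h := hkIdx (occ i k).1 (occ i k).2 (hoccValid i k)
  rw [hoccVar i k] at h
  exact hoccInj i (by rw [h])

/-- Characterization of an occupant of an `x` hospital. -/
lemma fM_inv_x'
    (hoccVar : ∀ i k, v (occ i k).1 (occ i k).2 = i)
    (hoccPol : ∀ i k, pol (occ i k).1 (occ i k).2 = decide ((k : ℕ) < 2))
    (hkIdx : ∀ (j : Fin m) (l : Fin 3), (l : ℕ) < (if (j : ℕ) < m₂ then 2 else 3) →
      occ (v j l) (kIdx j l) = (j, l))
    {r : Res11 n m} {i : Fin n} {k : Fin 3}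
    (hr : fM m₂ v pol kIdx a r = some (Hos11.x i k)) :
    r = Res11.c (occ i k).1 (occ i k).2 ∧
      (if (k : ℕ) < 2 then a i = false else a i = true) := by
  obtain ⟨j1, l1, rfl, hv, hk, hlen, hlit⟩ := fM_inv_x hr
  have hocc : occ i k = (j1, l1) := by
    rw [← hv, ← hk]
    exact hkIdx j1 l1 hlen
  have hlit2 := litB_occ (a := a) hoccVar hoccPol i k
  rw [hocc] at hlit2
  simp only at hlit2
  rw [hlit] at hlit2
  constructor
  · rw [hocc]
  · by_cases hk2 : (k : ℕ) < 2
    · rw [if_pos hk2] at hlit2 ⊢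
      exact hlit2.symm
    · rw [if_neg hk2] at hlit2 ⊢
      simpa using hlit2.symm

/-! Membership facts for `MB`. -/

lemma mem_e0T {i : Fin n} (hai : a i = true) :
    (Res11.e i 0, Hos11.b i 0) ∈ MB m₂ v pol kIdx a (m := m) :=
  mem_MB.mpr (by simp [fM, hai])

lemma mem_e0F {i : Fin n} (hai : a i = false) :
    (Res11.e i 0, Hos11.b i 2) ∈ MB m₂ v pol kIdx a (m := m) :=
  mem_MB.mpr (by simp [fM, hai])

lemma mem_e1T {i : Fin n} (hai : a i = true) :
    (Res11.e i 1, Hos11.b i 1) ∈ MB m₂ v pol kIdx a (m := m) :=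
  mem_MB.mpr (by simp [fM, hai])

lemma mem_e1F {i : Fin n} (hai : a i = false) :
    (Res11.e i 1, Hos11.b i 3) ∈ MB m₂ v pol kIdx a (m := m) :=
  mem_MB.mpr (by simp [fM, hai])

lemma mem_zt {j : Fin m} : (Res11.z j, Hos11.t j) ∈ MB m₂ v pol kIdx a (n := n) :=
  mem_MB.mpr (by simp [fM])

lemma mem_seated
    (hoccValid : ∀ i k, ((occ i k).2 : ℕ) < (if ((occ i k).1 : ℕ) < m₂ then 2 else 3))
    (hoccVar : ∀ i k, v (occ i k).1 (occ i k).2 = i)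
    (hoccPol : ∀ i k, pol (occ i k).1 (occ i k).2 = decide ((k : ℕ) < 2))
    (hoccInj : ∀ i, Function.Injective (occ i))
    (hkIdx : ∀ (j : Fin m) (l : Fin 3), (l : ℕ) < (if (j : ℕ) < m₂ then 2 else 3) →
      occ (v j l) (kIdx j l) = (j, l))
    {i : Fin n} {k : Fin 3}
    (hlit : (if (k : ℕ) < 2 then a i = false else a i = true)) :
    (Res11.c (occ i k).1 (occ i k).2, Hos11.x i k) ∈ MB m₂ v pol kIdx a := by
  rw [mem_MB]
  have hlitF : litB v pol a (occ i k).1 (occ i k).2 = false := by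
    rw [litB_occ hoccVar hoccPol i k]
    by_cases hk2 : (k : ℕ) < 2
    · rw [if_pos hk2] at hlit ⊢
      exact hlit
    · rw [if_neg hk2] at hlit ⊢
      simp [hlit]
  show fM m₂ v pol kIdx a (Res11.c (occ i k).1 (occ i k).2) = _
  simp only [fM]
  rw [if_pos (hoccValid i k), if_neg (by simp [hlitF]),
    hoccVar i k, kIdx_occ hoccValid hoccVar hoccInj hkIdx i k]

lemma mem_sel0 {j : Fin m} (hsel : (selB v pol a j : ℕ) < 2)
    (hlit : litB v pol a j (selB v pol a j) = true) :
    (Res11.c j (selB v pol a j), Hos11.a j 0) ∈ MB m₂ v pol kIdx a (n := n) := by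
  rw [mem_MB]
  show fM m₂ v pol kIdx a (Res11.c j (selB v pol a j)) = _
  simp only [fM]
  rw [if_pos (by split <;> omega), if_pos hlit]
  simp [hsel]

lemma mem_sel2 {j : Fin m} (hj : ¬ (j : ℕ) < m₂) (hsel : selB v pol a j = 2)
    (hlit : litB v pol a j (selB v pol a j) = true) :
    (Res11.c j 2, Hos11.a j 2) ∈ MB m₂ v pol kIdx a (n := n) := by
  rw [mem_MB]
  show fM m₂ v pol kIdx a (Res11.c j 2) = _
  simp only [fM]
  rw [if_pos (by rw [if_neg hj]; norm_num), if_pos (by rw [← hsel]; exact hlit)]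
  simp [hsel]

lemma mem_dA2 {j : Fin m} (hj : ¬ (j : ℕ) < m₂) (hsel : (selB v pol a j : ℕ) < 2) :
    (Res11.d j, Hos11.a j 2) ∈ MB m₂ v pol kIdx a (n := n) := by
  rw [mem_MB]
  show fM m₂ v pol kIdx a (Res11.d j) = _
  simp only [fM]
  rw [if_neg hj, if_pos hsel]

lemma mem_dA1 {j : Fin m} (hj : ¬ (j : ℕ) < m₂) (hsel : ¬ (selB v pol a j : ℕ) < 2) :
    (Res11.d j, Hos11.a j 1) ∈ MB m₂ v pol kIdx a (n := n) := by
  rw [mem_MB]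
  show fM m₂ v pol kIdx a (Res11.d j) = _
  simp only [fM]
  rw [if_neg hj, if_neg hsel]

/-- The selected literal of a satisfied clause is true and within range. -/
lemma selB_spec {j : Fin m}
    (hs : ∃ l : Fin 3, (l : ℕ) < (if (j : ℕ) < m₂ then 2 else 3) ∧
      litB v pol a j l = true) :
    litB v pol a j (selB v pol a j) = true ∧
      (selB v pol a j : ℕ) < (if (j : ℕ) < m₂ then 2 else 3) := by
  unfold selB
  by_cases h0 : litB v pol a j 0 = true
  · rw [if_pos h0]
    exact ⟨h0, by split <;> norm_num⟩
  · rw [if_neg h0]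
    by_cases h1 : litB v pol a j 1 = true
    · rw [if_pos h1]
      exact ⟨h1, by split <;> norm_num⟩
    · rw [if_neg h1]
      obtain ⟨l, hl, hlit⟩ := hs
      have hl2 : l = 2 := by
        apply Fin.ext
        have hne0 : (l : ℕ) ≠ 0 := fun h => h0 (by rwa [show l = 0 from Fin.ext h] at hlit)
        have hne1 : (l : ℕ) ≠ 1 := fun h => h1 (by rwa [show l = 1 from Fin.ext h] at hlit)
        omega
      subst hl2
      exact ⟨hlit, hl⟩

/-- `selB j = 1` forces the first literal to be false, etc. -/
lemma selB_min0 {j : Fin m} (h : selB v pol a j ≠ 0) : litB v pol a j 0 = false := by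
  unfold selB at h
  by_cases h0 : litB v pol a j 0 = true
  · rw [if_pos h0] at h
    exact absurd rfl h
  · simpa using h0

lemma selB_min1 {j : Fin m} (h : selB v pol a j ≠ 0) (h' : selB v pol a j ≠ 1) :
    litB v pol a j 1 = false := by
  have h0 := selB_min0 (v := v) (pol := pol) (a := a) h
  unfold selB at h'
  rw [if_neg (by simp [h0])] at h'
  by_cases h1 : litB v pol a j 1 = true
  · rw [if_pos h1] at h'
    exact absurd rfl h'
  · simpa using h1

/-! Region membership shortcuts. -/

lemma regmem_bx0 (i : Fin n) :
    ({Hos11.b i 0, Hos11.x i 0} : Finset (Hos11 n m)) ∈ regions11 m₂ :=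
  Or.inl ⟨i, Or.inl rfl⟩

lemma regmem_bx1 (i : Fin n) :
    ({Hos11.b i 1, Hos11.x i 1} : Finset (Hos11 n m)) ∈ regions11 m₂ :=
  Or.inl ⟨i, Or.inr (Or.inl rfl)⟩

lemma regmem_bx2 (i : Fin n) :
    ({Hos11.b i 2, Hos11.b i 3, Hos11.x i 2} : Finset (Hos11 n m)) ∈ regions11 m₂ :=
  Or.inl ⟨i, Or.inr (Or.inr rfl)⟩

lemma regmem_ay2 {j : Fin m} (hj : (j : ℕ) < m₂) :
    ({Hos11.a j 0, Hos11.y j} : Finset (Hos11 n m)) ∈ regions11 m₂ :=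
  Or.inr ⟨j, Or.inl ⟨hj, rfl⟩⟩

lemma regmem_aa {j : Fin m} (hj : ¬ (j : ℕ) < m₂) :
    ({Hos11.a j 0, Hos11.a j 1} : Finset (Hos11 n m)) ∈ regions11 m₂ :=
  Or.inr ⟨j, Or.inr (Or.inl ⟨hj, Or.inl rfl⟩)⟩

lemma regmem_ay3 {j : Fin m} (hj : ¬ (j : ℕ) < m₂) :
    ({Hos11.a j 2, Hos11.y j} : Finset (Hos11 n m)) ∈ regions11 m₂ :=
  Or.inr ⟨j, Or.inr (Or.inl ⟨hj, Or.inr rfl⟩)⟩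

lemma regmem_g (j : Fin m) :
    ({Hos11.g2 j, Hos11.g4 j, Hos11.t j} : Finset (Hos11 n m)) ∈ regions11 m₂ :=
  Or.inr ⟨j, Or.inr (Or.inr rfl)⟩

end Backward2

section Backward3

variable {n m m₂ : ℕ} {v : Fin m → Fin 3 → Fin n} {pol : Fin m → Fin 3 → Bool}
  {occ : Fin n → Fin 3 → Fin m × Fin 3} {kIdx : Fin m → Fin 3 → Fin 3} {a : Fin n → Bool}

lemma MB_matching
    (hkIdx : ∀ (j : Fin m) (l : Fin 3), (l : ℕ) < (if (j : ℕ) < m₂ then 2 else 3) →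
      occ (v j l) (kIdx j l) = (j, l)) :
    (ppnInstance223 m₂ v occ kIdx).IsMatching (MB m₂ v pol kIdx a) := by
  refine ⟨?_, ?_, ?_⟩
  · -- mutual acceptability
    rintro ⟨r, h⟩ hp
    have hr := mem_MB.mp hp
    simp only at hr
    clear hp
    cases r with
    | e i t =>
      simp only [fM, Option.some.injEq] at hr
      subst hr
      by_cases ht : (t : ℕ) = 0 <;> by_cases hai : a i = true <;>
        simp [prefRes11, prefHos11, ht, hai] <;> exact Fin.ext (by omega)
    | c j l =>
      simp only [fM] at hr
      by_cases h1 : (l : ℕ) < (if (j : ℕ) < m₂ then 2 else 3)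
      · rw [if_pos h1] at hr
        by_cases h2 : litB v pol a j l = true
        · rw [if_pos h2] at hr
          by_cases h3 : selB v pol a j = l
          · rw [if_pos h3] at hr
            simp only [Option.some.injEq] at hr
            subst hr
            by_cases h4 : (l : ℕ) < 2
            · rw [if_pos h4]
              constructor
              · simp [prefRes11, h4]
              · have : l = 0 ∨ l = 1 := by
                  have h5 : (l : ℕ) = 0 ∨ (l : ℕ) = 1 := by omega
                  rcases h5 with h | h
                  · exact Or.inl (Fin.ext h)
                  · exact Or.inr (Fin.ext h)
                rcases this with rfl | rfl <;> simp [prefHos11]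
            · have hjm : ¬ (j : ℕ) < m₂ := by
                intro hj
                rw [if_pos hj] at h1
                omega
              have hl2 : l = 2 := by
                apply Fin.ext
                rw [if_neg hjm] at h1
                omega
              subst hl2
              rw [if_neg h4]
              constructor
              · simp [prefRes11, hjm]
              · simp [prefHos11, hjm]
          · rw [if_neg h3] at hr
            exact absurd hr (by simp)
        · rw [if_neg h2] at hr
          simp only [Option.some.injEq] at hr
          subst hr
          constructor
          · by_cases h4 : (l : ℕ) < 2
            · simp [prefRes11, h4]
            · have hjm : ¬ (j : ℕ) < m₂ := by
                intro hj
                rw [if_pos hj] at h1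
                omega
              simp [prefRes11, h4, hjm]
          · simp [prefHos11, hkIdx j l h1]
      · rw [if_neg h1] at hr
        exact absurd hr (by simp)
    | d j =>
      simp only [fM] at hr
      by_cases h1 : (j : ℕ) < m₂
      · rw [if_pos h1] at hr
        exact absurd hr (by simp)
      · rw [if_neg h1] at hr
        simp only [Option.some.injEq] at hr
        subst hr
        by_cases h2 : (selB v pol a j : ℕ) < 2
        · rw [if_pos h2]
          exact ⟨by simp [prefRes11, h1], by simp [prefHos11, h1]⟩
        · rw [if_neg h2]
          exact ⟨by simp [prefRes11, h1], by simp [prefHos11, h1]⟩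
    | g1 j => exact absurd hr (by simp [fM])
    | g3 j => exact absurd hr (by simp [fM])
    | z j =>
      simp only [fM, Option.some.injEq] at hr
      subst hr
      exact ⟨by simp [prefRes11], by simp [prefHos11]⟩
  · -- uniqueness
    intro r h h' h1 h2
    have e1 := mem_MB.mp h1
    have e2 := mem_MB.mp h2
    simp only at e1 e2
    rw [e1] at e2
    exact Option.some.injEq _ _ ▸ e2
  · -- capacities
    intro h
    rw [pp_q]
    apply Finset.card_le_one.mpr
    intro r1 hr1 r2 hr2
    have hm1 := mem_MB.mp (mem_assignedTo.mp hr1)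
    have hm2 := mem_MB.mp (mem_assignedTo.mp hr2)
    simp only at hm1 hm2
    cases h with
    | b i t =>
      rcases fM_inv_b hm1 with ⟨h1t, h1r, -⟩ | ⟨h1t, h1r, -⟩ | ⟨h1t, h1r, -⟩ | ⟨h1t, h1r, -⟩ <;>
        rcases fM_inv_b hm2 with ⟨h2t, h2r, -⟩ | ⟨h2t, h2r, -⟩ | ⟨h2t, h2r, -⟩ | ⟨h2t, h2r, -⟩ <;>
        first
          | (rw [h1t] at h2t; exact absurd h2t (by decide))
          | rw [h1r, h2r]
    | x i k =>
      obtain ⟨j1, l1, rfl, hv1, hk1, hlen1, -⟩ := fM_inv_x hm1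
      obtain ⟨j2, l2, rfl, hv2, hk2, hlen2, -⟩ := fM_inv_x hm2
      have o1 : occ i k = (j1, l1) := by rw [← hv1, ← hk1]; exact hkIdx j1 l1 hlen1
      have o2 : occ i k = (j2, l2) := by rw [← hv2, ← hk2]; exact hkIdx j2 l2 hlen2
      rw [o1] at o2
      simp only [Prod.mk.injEq] at o2
      rw [o2.1, o2.2]
    | a j t =>
      have ht3 : (t : ℕ) = 0 ∨ (t : ℕ) = 1 ∨ (t : ℕ) = 2 := by omega
      rcases ht3 with ht | ht | ht
      · rw [show t = 0 from Fin.ext ht] at hm1 hm2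
        rw [(fM_inv_a0 hm1).1, (fM_inv_a0 hm2).1]
      · rw [show t = 1 from Fin.ext ht] at hm1 hm2
        rw [(fM_inv_a1 hm1).1, (fM_inv_a1 hm2).1]
      · rw [show t = 2 from Fin.ext ht] at hm1 hm2
        rcases (fM_inv_a2 hm1).2 with ⟨h1r, h1s⟩ | ⟨h1r, h1s, -⟩ <;>
          rcases (fM_inv_a2 hm2).2 with ⟨h2r, h2s⟩ | ⟨h2r, h2s, -⟩
        · rw [h1r, h2r]
        · rw [h2s] at h1s
          exact absurd h1s (by decide)
        · rw [h1s] at h2s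
          exact absurd h2s (by decide)
        · rw [h1r, h2r]
    | y j => exact absurd hm1 fM_inv_y
    | g2 j => exact absurd hm1 fM_inv_g2
    | g4 j => exact absurd hm1 fM_inv_g4
    | t j => rw [fM_inv_t hm1, fM_inv_t hm2]

lemma MB_feasible
    (hoccVar : ∀ i k, v (occ i k).1 (occ i k).2 = i)
    (hoccPol : ∀ i k, pol (occ i k).1 (occ i k).2 = decide ((k : ℕ) < 2))
    (hkIdx : ∀ (j : Fin m) (l : Fin 3), (l : ℕ) < (if (j : ℕ) < m₂ then 2 else 3) →
      occ (v j l) (kIdx j l) = (j, l)) :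
    (ppnInstance223 m₂ v occ kIdx).FeasibleCaps (MB m₂ v pol kIdx a) := by
  intro E hE
  rw [pp_regions] at hE
  rw [pp_cap]
  have memIff : ∀ (r : Res11 n m) (E' : Finset (Hos11 n m)),
      r ∈ assignedIn (MB m₂ v pol kIdx a) E' ↔
        ∃ h' ∈ E', fM m₂ v pol kIdx a r = some h' := by
    intro r E'
    rw [mem_assignedIn]
    exact ⟨fun ⟨h', h1, h2⟩ => ⟨h', h1, mem_MB.mp h2⟩,
      fun ⟨h', h1, h2⟩ => ⟨h', h1, mem_MB.mpr h2⟩⟩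
  simp only [regions11, Set.mem_setOf_eq] at hE
  rcases hE with ⟨i, rfl | rfl | rfl⟩ | ⟨j, ⟨hj, rfl⟩ | ⟨hj, rfl | rfl⟩ | rfl⟩
  · -- {b i 0, x i 0}
    rw [cap_bx0]
    apply Finset.card_le_one.mpr
    intro r1 hr1 r2 hr2
    have key : ∀ r', r' ∈ assignedIn (MB m₂ v pol kIdx a)
        ({Hos11.b i 0, Hos11.x i 0} : Finset (Hos11 n m)) →
        (r' = Res11.e i 0 ∧ a i = true) ∨
        (r' = Res11.c (occ i 0).1 (occ i 0).2 ∧ a i = false) := by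
      intro r' hr'
      obtain ⟨h', hmem', hm'⟩ := (memIff r' _).mp hr'
      simp only [Finset.mem_insert, Finset.mem_singleton] at hmem'
      rcases hmem' with rfl | rfl
      · rcases fM_inv_b hm' with ⟨-, rfl, hai⟩ | ⟨h0, -, -⟩ | ⟨h0, -, -⟩ | ⟨h0, -, -⟩
        · exact Or.inl ⟨rfl, hai⟩
        all_goals exact absurd h0 (by decide)
      · obtain ⟨rfl, hcond⟩ := fM_inv_x' hoccVar hoccPol hkIdx hm'
        rw [if_pos (by norm_num)] at hcond
        exact Or.inr ⟨rfl, hcond⟩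
    rcases key r1 hr1 with ⟨e1, a1⟩ | ⟨e1, a1⟩ <;> rcases key r2 hr2 with ⟨e2, a2⟩ | ⟨e2, a2⟩ <;>
      first
        | (rw [a1] at a2; exact absurd a2 (by decide))
        | (rw [a2] at a1; exact absurd a1 (by decide))
        | rw [e1, e2]
  · -- {b i 1, x i 1}
    rw [cap_bx1]
    apply Finset.card_le_one.mpr
    intro r1 hr1 r2 hr2
    have key : ∀ r', r' ∈ assignedIn (MB m₂ v pol kIdx a)
        ({Hos11.b i 1, Hos11.x i 1} : Finset (Hos11 n m)) →
        (r' = Res11.e i 1 ∧ a i = true) ∨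
        (r' = Res11.c (occ i 1).1 (occ i 1).2 ∧ a i = false) := by
      intro r' hr'
      obtain ⟨h', hmem', hm'⟩ := (memIff r' _).mp hr'
      simp only [Finset.mem_insert, Finset.mem_singleton] at hmem'
      rcases hmem' with rfl | rfl
      · rcases fM_inv_b hm' with ⟨h0, -, -⟩ | ⟨h0, -, -⟩ | ⟨-, rfl, hai⟩ | ⟨h0, -, -⟩
        · exact absurd h0 (by decide)
        · exact absurd h0 (by decide)
        · exact Or.inl ⟨rfl, hai⟩
        · exact absurd h0 (by decide)
      · obtain ⟨rfl, hcond⟩ := fM_inv_x' hoccVar hoccPol hkIdx hm'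
        rw [if_pos (by norm_num)] at hcond
        exact Or.inr ⟨rfl, hcond⟩
    rcases key r1 hr1 with ⟨e1, a1⟩ | ⟨e1, a1⟩ <;> rcases key r2 hr2 with ⟨e2, a2⟩ | ⟨e2, a2⟩ <;>
      first
        | (rw [a1] at a2; exact absurd a2 (by decide))
        | (rw [a2] at a1; exact absurd a1 (by decide))
        | rw [e1, e2]
  · -- {b i 2, b i 3, x i 2}
    rw [cap_bx2]
    by_cases hai : a i = true
    · have hsub : assignedIn (MB m₂ v pol kIdx a)
          ({Hos11.b i 2, Hos11.b i 3, Hos11.x i 2} : Finset (Hos11 n m)) ⊆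
          {Res11.c (occ i 2).1 (occ i 2).2} := by
        intro r' hr'
        obtain ⟨h', hmem', hm'⟩ := (memIff r' _).mp hr'
        simp only [Finset.mem_insert, Finset.mem_singleton] at hmem'
        rcases hmem' with rfl | rfl | rfl
        · rcases fM_inv_b hm' with ⟨h0, -, -⟩ | ⟨-, -, haf⟩ | ⟨h0, -, -⟩ | ⟨h0, -, -⟩
          · exact absurd h0 (by decide)
          · rw [hai] at haf; exact absurd haf (by decide)
          · exact absurd h0 (by decide)
          · exact absurd h0 (by decide)
        · rcases fM_inv_b hm' with ⟨h0, -, -⟩ | ⟨h0, -, -⟩ | ⟨h0, -, -⟩ | ⟨-, -, haf⟩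
          · exact absurd h0 (by decide)
          · exact absurd h0 (by decide)
          · exact absurd h0 (by decide)
          · rw [hai] at haf; exact absurd haf (by decide)
        · obtain ⟨rfl, hcond⟩ := fM_inv_x' hoccVar hoccPol hkIdx hm'
          rw [if_neg (by norm_num)] at hcond
          simp
      calc _ ≤ ({Res11.c (occ i 2).1 (occ i 2).2} : Finset (Res11 n m)).card :=
            Finset.card_le_card hsub
        _ ≤ 2 := by simp
    · have hsub : assignedIn (MB m₂ v pol kIdx a)
          ({Hos11.b i 2, Hos11.b i 3, Hos11.x i 2} : Finset (Hos11 n m)) ⊆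
          {Res11.e i 0, Res11.e i 1} := by
        intro r' hr'
        obtain ⟨h', hmem', hm'⟩ := (memIff r' _).mp hr'
        simp only [Finset.mem_insert, Finset.mem_singleton] at hmem'
        rcases hmem' with rfl | rfl | rfl
        · rcases fM_inv_b hm' with ⟨h0, -, -⟩ | ⟨-, rfl, -⟩ | ⟨h0, -, -⟩ | ⟨h0, -, -⟩
          · exact absurd h0 (by decide)
          · simp
          · exact absurd h0 (by decide)
          · exact absurd h0 (by decide)
        · rcases fM_inv_b hm' with ⟨h0, -, -⟩ | ⟨h0, -, -⟩ | ⟨h0, -, -⟩ | ⟨-, rfl, -⟩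
          · exact absurd h0 (by decide)
          · exact absurd h0 (by decide)
          · exact absurd h0 (by decide)
          · simp
        · obtain ⟨rfl, hcond⟩ := fM_inv_x' hoccVar hoccPol hkIdx hm'
          rw [if_neg (by norm_num)] at hcond
          exact absurd hcond hai
      calc _ ≤ ({Res11.e i 0, Res11.e i 1} : Finset (Res11 n m)).card :=
            Finset.card_le_card hsub
        _ ≤ 2 := Finset.card_insert_le _ _ |>.trans (by simp)
  · -- 2-clause region {a j 0, y j}
    rw [cap_ay]
    apply Finset.card_le_one.mpr
    intro r1 hr1 r2 hr2
    have key : ∀ r', r' ∈ assignedIn (MB m₂ v pol kIdx a)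
        ({Hos11.a j 0, Hos11.y j} : Finset (Hos11 n m)) →
        r' = Res11.c j (selB v pol a j) := by
      intro r' hr'
      obtain ⟨h', hmem', hm'⟩ := (memIff r' _).mp hr'
      simp only [Finset.mem_insert, Finset.mem_singleton] at hmem'
      rcases hmem' with rfl | rfl
      · exact (fM_inv_a0 hm').1
      · exact absurd hm' fM_inv_y
    rw [key r1 hr1, key r2 hr2]
  · -- 3-clause region {a j 0, a j 1}
    rw [cap_aa]
    apply Finset.card_le_one.mpr
    intro r1 hr1 r2 hr2
    have key : ∀ r', r' ∈ assignedIn (MB m₂ v pol kIdx a)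
        ({Hos11.a j 0, Hos11.a j 1} : Finset (Hos11 n m)) →
        (r' = Res11.c j (selB v pol a j) ∧ (selB v pol a j : ℕ) < 2) ∨
        (r' = Res11.d j ∧ ¬ (selB v pol a j : ℕ) < 2) := by
      intro r' hr'
      obtain ⟨h', hmem', hm'⟩ := (memIff r' _).mp hr'
      simp only [Finset.mem_insert, Finset.mem_singleton] at hmem'
      rcases hmem' with rfl | rfl
      · obtain ⟨h1, h2, -⟩ := fM_inv_a0 hm'
        exact Or.inl ⟨h1, h2⟩
      · obtain ⟨h1, h2, -⟩ := fM_inv_a1 hm'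
        exact Or.inr ⟨h1, h2⟩
    rcases key r1 hr1 with ⟨e1, s1⟩ | ⟨e1, s1⟩ <;> rcases key r2 hr2 with ⟨e2, s2⟩ | ⟨e2, s2⟩ <;>
      first
        | exact absurd s1 s2
        | exact absurd s2 s1
        | rw [e1, e2]
  · -- 3-clause region {a j 2, y j}
    rw [cap_ay]
    apply Finset.card_le_one.mpr
    intro r1 hr1 r2 hr2
    have key : ∀ r', r' ∈ assignedIn (MB m₂ v pol kIdx a)
        ({Hos11.a j 2, Hos11.y j} : Finset (Hos11 n m)) →
        (r' = Res11.d j ∧ (selB v pol a j : ℕ) < 2) ∨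
        (r' = Res11.c j 2 ∧ selB v pol a j = 2) := by
      intro r' hr'
      obtain ⟨h', hmem', hm'⟩ := (memIff r' _).mp hr'
      simp only [Finset.mem_insert, Finset.mem_singleton] at hmem'
      rcases hmem' with rfl | rfl
      · rcases (fM_inv_a2 hm').2 with ⟨h1, h2⟩ | ⟨h1, h2, -⟩
        · exact Or.inl ⟨h1, h2⟩
        · exact Or.inr ⟨h1, h2⟩
      · exact absurd hm' fM_inv_y
    rcases key r1 hr1 with ⟨e1, s1⟩ | ⟨e1, s1⟩ <;> rcases key r2 hr2 with ⟨e2, s2⟩ | ⟨e2, s2⟩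
    · rw [e1, e2]
    · rw [s2] at s1
      exact absurd s1 (by decide)
    · rw [s1] at s2
      exact absurd s2 (by decide)
    · rw [e1, e2]
  · -- terminal region
    rw [cap_g]
    apply Finset.card_le_one.mpr
    intro r1 hr1 r2 hr2
    have key : ∀ r', r' ∈ assignedIn (MB m₂ v pol kIdx a)
        ({Hos11.g2 j, Hos11.g4 j, Hos11.t j} : Finset (Hos11 n m)) →
        r' = Res11.z j := by
      intro r' hr'
      obtain ⟨h', hmem', hm'⟩ := (memIff r' _).mp hr'
      simp only [Finset.mem_insert, Finset.mem_singleton] at hmem'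
      rcases hmem' with rfl | rfl | rfl
      · exact absurd hm' fM_inv_g2
      · exact absurd hm' fM_inv_g4
      · exact fM_inv_t hm'
    rw [key r1 hr1, key r2 hr2]

end Backward3

section Backward4

variable {n m m₂ : ℕ} {v : Fin m → Fin 3 → Fin n} {pol : Fin m → Fin 3 → Bool}
  {occ : Fin n → Fin 3 → Fin m × Fin 3} {kIdx : Fin m → Fin 3 → Fin 3} {a : Fin n → Bool}

lemma MB_nosbp
    (hoccValid : ∀ i k, ((occ i k).2 : ℕ) < (if ((occ i k).1 : ℕ) < m₂ then 2 else 3))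
    (hoccVar : ∀ i k, v (occ i k).1 (occ i k).2 = i)
    (hoccPol : ∀ i k, pol (occ i k).1 (occ i k).2 = decide ((k : ℕ) < 2))
    (hoccInj : ∀ i, Function.Injective (occ i))
    (hkIdx : ∀ (j : Fin m) (l : Fin 3), (l : ℕ) < (if (j : ℕ) < m₂ then 2 else 3) →
      occ (v j l) (kIdx j l) = (j, l))
    (hsat : ∀ j : Fin m, ∃ l : Fin 3, (l : ℕ) < (if (j : ℕ) < m₂ then 2 else 3) ∧
      litB v pol a j l = true) :
    ∀ r h, ¬ (ppnInstance223 m₂ v occ kIdx).IsSBP (MB m₂ v pol kIdx a) r h := by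
  intro r h hsbp
  obtain ⟨⟨hnm, ⟨hacc1, hacc2⟩, himpr, hcap⟩, hstrong⟩ := hsbp
  rw [pp_prefR] at hacc1 himpr
  rw [pp_prefH] at hacc2 hcap
  rw [pp_q] at hcap
  -- helper: the resident is already matched to the head of its list
  have topRef : ∀ (r0 : Res11 n m) (h0 hh : Hos11 n m) (rest : List (Hos11 n m)),
      fM m₂ v pol kIdx a r0 = some h0 →
      prefRes11 m₂ v kIdx r0 = h0 :: rest →
      ¬ ((∀ h', (r0, h') ∉ MB m₂ v pol kIdx a) ∨
        ∃ h', (r0, h') ∈ MB m₂ v pol kIdx a ∧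
          ListPref (prefRes11 m₂ v kIdx r0) hh h') := by
    rintro r0 h0 hh rest hf hpref (hun | ⟨h', hm', hlp⟩)
    · exact hun h0 (mem_MB.mpr hf)
    · have hh0 : h' = h0 := by
        have h1 := mem_MB.mp hm'
        simp only at h1
        rw [hf] at h1
        exact (Option.some.injEq _ _).mp h1.symm
      subst hh0
      rw [hpref] at hlp
      exact not_listPref_head _ _ _ hlp
  -- helper: the hospital is full with a resident it prefers
  have fullRef : ∀ (h0 : Hos11 n m) (r0 rr : Res11 n m) (rest : List (Res11 n m)),
      fM m₂ v pol kIdx a r0 = some h0 →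
      (∀ r', fM m₂ v pol kIdx a r' = some h0 → r' = r0) →
      prefHos11 m₂ occ h0 = r0 :: rest →
      ¬ ((assignedTo (MB m₂ v pol kIdx a) h0).card < 1 ∨
        ∃ r' ∈ assignedTo (MB m₂ v pol kIdx a) h0,
          ListPref (prefHos11 m₂ occ h0) rr r') := by
    rintro h0 r0 rr rest hf huq hpref (hlt | ⟨r', hr', hlp⟩)
    · have : r0 ∈ assignedTo (MB m₂ v pol kIdx a) h0 :=
        mem_assignedTo.mpr (mem_MB.mpr hf)
      have := Finset.card_pos.mpr ⟨r0, this⟩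
      omega
    · have : r' = r0 := huq r' (mem_MB.mp (mem_assignedTo.mp hr'))
      subst this
      rw [hpref] at hlp
      exact not_listPref_head _ _ _ hlp
  -- helpers: infeasibility of a move
  have moveRef2 : ∀ (r0 : Res11 n m) (h0 : Hos11 n m) (E : Finset (Hos11 n m)),
      E ∈ regions11 m₂ → cap11 E = 1 →
      ∀ r1 r2 : Res11 n m, r1 ≠ r2 →
      r1 ∈ assignedIn (move (MB m₂ v pol kIdx a) r0 h0) E →
      r2 ∈ assignedIn (move (MB m₂ v pol kIdx a) r0 h0) E →
      ¬ (ppnInstance223 m₂ v occ kIdx).FeasibleCaps (move (MB m₂ v pol kIdx a) r0 h0) := by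
    intro r0 h0 E hreg hcapE r1 r2 hne h1 h2 hfeas
    have hle := hfeas E hreg
    rw [pp_cap, hcapE] at hle
    have := Finset.one_lt_card.mpr ⟨r1, h1, r2, h2, hne⟩
    omega
  have moveRef3 : ∀ (r0 : Res11 n m) (h0 : Hos11 n m) (E : Finset (Hos11 n m)),
      E ∈ regions11 m₂ → cap11 E = 2 →
      ∀ r1 r2 r3 : Res11 n m, r1 ≠ r2 → r1 ≠ r3 → r2 ≠ r3 →
      r1 ∈ assignedIn (move (MB m₂ v pol kIdx a) r0 h0) E →
      r2 ∈ assignedIn (move (MB m₂ v pol kIdx a) r0 h0) E →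
      r3 ∈ assignedIn (move (MB m₂ v pol kIdx a) r0 h0) E →
      ¬ (ppnInstance223 m₂ v occ kIdx).FeasibleCaps (move (MB m₂ v pol kIdx a) r0 h0) := by
    intro r0 h0 E hreg hcapE r1 r2 r3 h12 h13 h23 h1 h2 h3 hfeas
    have hle := hfeas E hreg
    rw [pp_cap, hcapE] at hle
    have := Finset.two_lt_card_iff.mpr ⟨r1, r2, r3, h1, h2, h3, h12, h13, h23⟩
    omega
  cases r with
  | e i t =>
    by_cases ht : (t : ℕ) = 0
    · have ht' : t = 0 := Fin.ext ht
      subst ht'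
      simp [prefRes11] at hacc1
      by_cases hai : a i = true
      · rcases hacc1 with rfl | rfl
        · exact hnm (mem_e0T hai)
        · exact topRef (Res11.e i 0) (Hos11.b i 0) (Hos11.b i 2) [Hos11.b i 2]
            (by simp [fM, hai]) (by simp [prefRes11]) himpr
      · have haif : a i = false := by simpa using hai
        rcases hacc1 with rfl | rfl
        · rcases hstrong with hfeas | ⟨r', hr', -⟩
          · refine moveRef2 (Res11.e i 0) (Hos11.b i 0) {Hos11.b i 0, Hos11.x i 0}
              (regmem_bx0 i) (cap_bx0 i) (Res11.e i 0)
              (Res11.c (occ i 0).1 (occ i 0).2) (by simp) ?_ ?_ hfeas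
            · exact mem_assignedIn_move.mpr (Or.inl ⟨rfl, by simp⟩)
            · refine mem_assignedIn_move.mpr (Or.inr ⟨by simp, Hos11.x i 0, by simp, ?_⟩)
              exact mem_seated hoccValid hoccVar hoccPol hoccInj hkIdx
                (by rw [if_pos (by norm_num)]; exact haif)
          · have hf := mem_MB.mp (mem_assignedTo.mp hr')
            simp only at hf
            rcases fM_inv_b hf with ⟨-, -, hT⟩ | ⟨h0, -, -⟩ | ⟨h0, -, -⟩ | ⟨h0, -, -⟩
            · rw [hT] at haif; exact absurd haif (by decide)
            all_goals exact absurd h0 (by decide)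
        · exact hnm (mem_e0F haif)
    · have ht' : t = 1 := Fin.ext (by omega)
      subst ht'
      simp [prefRes11] at hacc1
      by_cases hai : a i = true
      · rcases hacc1 with rfl | rfl
        · exact hnm (mem_e1T hai)
        · exact topRef (Res11.e i 1) (Hos11.b i 1) (Hos11.b i 3) [Hos11.b i 3]
            (by simp [fM, hai]) (by simp [prefRes11]) himpr
      · have haif : a i = false := by simpa using hai
        rcases hacc1 with rfl | rfl
        · rcases hstrong with hfeas | ⟨r', hr', -⟩
          · refine moveRef2 (Res11.e i 1) (Hos11.b i 1) {Hos11.b i 1, Hos11.x i 1}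
              (regmem_bx1 i) (cap_bx1 i) (Res11.e i 1)
              (Res11.c (occ i 1).1 (occ i 1).2) (by simp) ?_ ?_ hfeas
            · exact mem_assignedIn_move.mpr (Or.inl ⟨rfl, by simp⟩)
            · refine mem_assignedIn_move.mpr (Or.inr ⟨by simp, Hos11.x i 1, by simp, ?_⟩)
              exact mem_seated hoccValid hoccVar hoccPol hoccInj hkIdx
                (by rw [if_pos (by norm_num)]; exact haif)
          · have hf := mem_MB.mp (mem_assignedTo.mp hr')
            simp only at hf
            rcases fM_inv_b hf with ⟨h0, -, -⟩ | ⟨h0, -, -⟩ | ⟨-, -, hT⟩ | ⟨h0, -, -⟩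
            · exact absurd h0 (by decide)
            · exact absurd h0 (by decide)
            · rw [hT] at haif; exact absurd haif (by decide)
            · exact absurd h0 (by decide)
        · exact hnm (mem_e1F haif)
  | z j =>
    simp only [prefRes11, List.mem_cons, List.mem_singleton, List.not_mem_nil,
      or_false] at hacc1
    rcases hacc1 with rfl | rfl
    · -- h = y j
      rcases hstrong with hfeas | ⟨r', hr', -⟩
      · obtain ⟨hlit, hlen⟩ := selB_spec (hsat j)
        by_cases hj : (j : ℕ) < m₂
        · refine moveRef2 (Res11.z j) (Hos11.y j) {Hos11.a j 0, Hos11.y j}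
            (regmem_ay2 hj) (cap_ay j 0) (Res11.z j) (Res11.c j (selB v pol a j))
            (by simp) ?_ ?_ hfeas
          · exact mem_assignedIn_move.mpr (Or.inl ⟨rfl, by simp⟩)
          · refine mem_assignedIn_move.mpr (Or.inr ⟨by simp, Hos11.a j 0, by simp, ?_⟩)
            exact mem_sel0 (by rw [if_pos hj] at hlen; exact hlen) hlit
        · by_cases hsel : (selB v pol a j : ℕ) < 2
          · refine moveRef2 (Res11.z j) (Hos11.y j) {Hos11.a j 2, Hos11.y j}
              (regmem_ay3 hj) (cap_ay j 2) (Res11.z j) (Res11.d j)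
              (by simp) ?_ ?_ hfeas
            · exact mem_assignedIn_move.mpr (Or.inl ⟨rfl, by simp⟩)
            · exact mem_assignedIn_move.mpr (Or.inr ⟨by simp, Hos11.a j 2, by simp,
                mem_dA2 hj hsel⟩)
          · have hsel2 : selB v pol a j = 2 := by
              apply Fin.ext
              have := (selB v pol a j).isLt
              omega
            refine moveRef2 (Res11.z j) (Hos11.y j) {Hos11.a j 2, Hos11.y j}
              (regmem_ay3 hj) (cap_ay j 2) (Res11.z j) (Res11.c j 2)
              (by simp) ?_ ?_ hfeas
            · exact mem_assignedIn_move.mpr (Or.inl ⟨rfl, by simp⟩)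
            · exact mem_assignedIn_move.mpr (Or.inr ⟨by simp, Hos11.a j 2, by simp,
                mem_sel2 hj hsel2 hlit⟩)
      · have hf := mem_MB.mp (mem_assignedTo.mp hr')
        exact absurd hf fM_inv_y
    · -- h = t j
      exact hnm mem_zt
  | g1 j =>
    simp only [prefRes11, List.mem_cons, List.mem_singleton, List.not_mem_nil,
      or_false] at hacc1
    rcases hstrong with hfeas | ⟨r', hr', -⟩
    · refine moveRef2 (Res11.g1 j) h {Hos11.g2 j, Hos11.g4 j, Hos11.t j}
        (regmem_g j) (cap_g j) (Res11.g1 j) (Res11.z j) (by simp) ?_ ?_ hfeas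
      · refine mem_assignedIn_move.mpr (Or.inl ⟨rfl, ?_⟩)
        rcases hacc1 with rfl | rfl <;> simp
      · exact mem_assignedIn_move.mpr (Or.inr ⟨by simp, Hos11.t j, by simp, mem_zt⟩)
    · have hf := mem_MB.mp (mem_assignedTo.mp hr')
      rcases hacc1 with rfl | rfl
      · exact absurd hf fM_inv_g2
      · exact absurd hf fM_inv_g4
  | g3 j =>
    simp only [prefRes11, List.mem_cons, List.mem_singleton, List.not_mem_nil,
      or_false] at hacc1
    rcases hstrong with hfeas | ⟨r', hr', -⟩
    · refine moveRef2 (Res11.g3 j) h {Hos11.g2 j, Hos11.g4 j, Hos11.t j}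
        (regmem_g j) (cap_g j) (Res11.g3 j) (Res11.z j) (by simp) ?_ ?_ hfeas
      · refine mem_assignedIn_move.mpr (Or.inl ⟨rfl, ?_⟩)
        rcases hacc1 with rfl | rfl <;> simp
      · exact mem_assignedIn_move.mpr (Or.inr ⟨by simp, Hos11.t j, by simp, mem_zt⟩)
    · have hf := mem_MB.mp (mem_assignedTo.mp hr')
      rcases hacc1 with rfl | rfl
      · exact absurd hf fM_inv_g4
      · exact absurd hf fM_inv_g2
  | d j =>
    by_cases hj : (j : ℕ) < m₂
    · simp [prefRes11, hj] at hacc1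
    · simp only [prefRes11, if_neg hj, List.mem_cons, List.mem_singleton,
        List.not_mem_nil, or_false] at hacc1
      obtain ⟨hlit, hlen⟩ := selB_spec (hsat j)
      by_cases hsel : (selB v pol a j : ℕ) < 2
      · rcases hacc1 with rfl | rfl
        · -- h = a j 1, d is at a j 2
          rcases hstrong with hfeas | ⟨r', hr', -⟩
          · refine moveRef2 (Res11.d j) (Hos11.a j 1) {Hos11.a j 0, Hos11.a j 1}
              (regmem_aa hj) (cap_aa j) (Res11.d j) (Res11.c j (selB v pol a j))
              (by simp) ?_ ?_ hfeas
            · exact mem_assignedIn_move.mpr (Or.inl ⟨rfl, by simp⟩)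
            · exact mem_assignedIn_move.mpr (Or.inr ⟨by simp, Hos11.a j 0, by simp,
                mem_sel0 hsel hlit⟩)
          · have hf := mem_MB.mp (mem_assignedTo.mp hr')
            simp only at hf
            exact absurd hsel (fM_inv_a1 hf).2.1
        · exact hnm (mem_dA2 hj hsel)
      · rcases hacc1 with rfl | rfl
        · exact hnm (mem_dA1 hj hsel)
        · exact topRef (Res11.d j) (Hos11.a j 1) (Hos11.a j 2) [Hos11.a j 2]
            (by simp only [fM]; rw [if_neg hj, if_neg hsel]) (by simp [prefRes11, hj]) himpr
  | c j l =>
    have hxcase : ∀ hlen : (l : ℕ) < (if (j : ℕ) < m₂ then 2 else 3),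
        h = Hos11.x (v j l) (kIdx j l) → False := by
      intro hlen hx
      subst hx
      have hocc : occ (v j l) (kIdx j l) = (j, l) := hkIdx j l hlen
      have hlitval : litB v pol a j l =
          (if (kIdx j l : ℕ) < 2 then a (v j l) else !(a (v j l))) := by
        have hh := litB_occ (a := a) hoccVar hoccPol (v j l) (kIdx j l)
        rwa [hocc] at hh
      by_cases hlit : litB v pol a j l = true
      · rcases hstrong with hfeas | ⟨r', hr', -⟩
        · have hk3 : (kIdx j l : ℕ) = 0 ∨ (kIdx j l : ℕ) = 1 ∨ (kIdx j l : ℕ) = 2 := by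
            omega
          rcases hk3 with hk | hk | hk
          · have hkk : kIdx j l = 0 := Fin.ext hk
            have hai : a (v j l) = true := by
              rw [hlitval, hkk] at hlit
              simpa using hlit
            refine moveRef2 (Res11.c j l) (Hos11.x (v j l) (kIdx j l))
              {Hos11.b (v j l) 0, Hos11.x (v j l) 0} (regmem_bx0 _) (cap_bx0 _)
              (Res11.c j l) (Res11.e (v j l) 0) (by simp) ?_ ?_ hfeas
            · exact mem_assignedIn_move.mpr (Or.inl ⟨rfl, by rw [hkk]; simp⟩)
            · exact mem_assignedIn_move.mpr (Or.inr ⟨by simp, Hos11.b (v j l) 0,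
                by simp, mem_e0T hai⟩)
          · have hkk : kIdx j l = 1 := Fin.ext hk
            have hai : a (v j l) = true := by
              rw [hlitval, hkk] at hlit
              simpa using hlit
            refine moveRef2 (Res11.c j l) (Hos11.x (v j l) (kIdx j l))
              {Hos11.b (v j l) 1, Hos11.x (v j l) 1} (regmem_bx1 _) (cap_bx1 _)
              (Res11.c j l) (Res11.e (v j l) 1) (by simp) ?_ ?_ hfeas
            · exact mem_assignedIn_move.mpr (Or.inl ⟨rfl, by rw [hkk]; simp⟩)
            · exact mem_assignedIn_move.mpr (Or.inr ⟨by simp, Hos11.b (v j l) 1,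
                by simp, mem_e1T hai⟩)
          · have hkk : kIdx j l = 2 := Fin.ext hk
            have hai : a (v j l) = false := by
              rw [hlitval, hkk] at hlit
              simpa using hlit
            refine moveRef3 (Res11.c j l) (Hos11.x (v j l) (kIdx j l))
              {Hos11.b (v j l) 2, Hos11.b (v j l) 3, Hos11.x (v j l) 2}
              (regmem_bx2 _) (cap_bx2 _)
              (Res11.c j l) (Res11.e (v j l) 0) (Res11.e (v j l) 1)
              (by simp) (by simp) (by simp) ?_ ?_ ?_ hfeas
            · exact mem_assignedIn_move.mpr (Or.inl ⟨rfl, by rw [hkk]; simp⟩)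
            · exact mem_assignedIn_move.mpr (Or.inr ⟨by simp, Hos11.b (v j l) 2,
                by simp, mem_e0F hai⟩)
            · exact mem_assignedIn_move.mpr (Or.inr ⟨by simp, Hos11.b (v j l) 3,
                by simp, mem_e1F hai⟩)
        · have hf := mem_MB.mp (mem_assignedTo.mp hr')
          simp only at hf
          obtain ⟨-, hcond⟩ := fM_inv_x' hoccVar hoccPol hkIdx hf
          rw [hlitval] at hlit
          by_cases hk2 : (kIdx j l : ℕ) < 2
          · rw [if_pos hk2] at hcond hlit
            rw [hcond] at hlit
            exact absurd hlit (by decide)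
          · rw [if_neg hk2] at hcond hlit
            rw [hcond] at hlit
            simp at hlit
      · have hlitF : litB v pol a j l = false := by simpa using hlit
        apply hnm
        rw [mem_MB]
        show fM m₂ v pol kIdx a (Res11.c j l) = _
        simp only [fM]
        rw [if_pos hlen, if_neg (by simp [hlitF])]
    by_cases hl2 : (l : ℕ) < 2
    · have hlen : (l : ℕ) < (if (j : ℕ) < m₂ then 2 else 3) := by split <;> omega
      simp only [prefRes11, if_pos hl2, List.mem_cons, List.mem_singleton,
        List.not_mem_nil, or_false] at hacc1
      rcases hacc1 with rfl | rfl
      · exact hxcase hlen rfl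
      · -- h = a j 0
        by_cases hlit : litB v pol a j l = true
        · by_cases hsel : selB v pol a j = l
          · apply hnm
            have hmm := mem_sel0 (m₂ := m₂) (kIdx := kIdx)
              (by rw [hsel]; exact hl2) (by rw [hsel]; exact hlit)
            rwa [hsel] at hmm
          · have hl1 : l = 1 := by
              by_cases hl0 : l = 0
              · exfalso
                apply hsel
                subst hl0
                unfold selB
                rw [if_pos hlit]
              · apply Fin.ext
                have : (l : ℕ) ≠ 0 := fun hh => hl0 (Fin.ext hh)
                omega
            subst hl1
            have h0 : litB v pol a j 0 = true := by
              by_contra h0f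
              apply hsel
              unfold selB
              rw [if_neg h0f, if_pos hlit]
            have hsel0 : selB v pol a j = 0 := by
              unfold selB
              rw [if_pos h0]
            refine fullRef (Hos11.a j 0) (Res11.c j 0) (Res11.c j 1) [Res11.c j 1]
              ?_ ?_ ?_ hcap
            · have hmm := mem_MB.mp (mem_sel0 (m₂ := m₂) (kIdx := kIdx)
                (by rw [hsel0]; norm_num) (by rw [hsel0]; exact h0))
              simp only at hmm
              rwa [hsel0] at hmm
            · intro r' hr'
              have hh := (fM_inv_a0 hr').1
              rwa [hsel0] at hh
            · simp [prefHos11]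
        · have hlitF : litB v pol a j l = false := by simpa using hlit
          refine topRef (Res11.c j l) (Hos11.x (v j l) (kIdx j l)) (Hos11.a j 0)
            [Hos11.a j 0] ?_ ?_ himpr
          · simp only [fM]
            rw [if_pos hlen, if_neg (by simp [hlitF])]
          · simp [prefRes11, hl2]
    · by_cases hj : (j : ℕ) < m₂
      · simp [prefRes11, hl2, hj] at hacc1
      · have hl2' : l = 2 := by
          apply Fin.ext
          have := l.isLt
          omega
        subst hl2'
        have hlen : ((2 : Fin 3) : ℕ) < (if (j : ℕ) < m₂ then 2 else 3) := by
          rw [if_neg hj]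
          norm_num
        simp only [prefRes11, if_neg hl2, if_neg hj, List.mem_cons, List.mem_singleton,
          List.not_mem_nil, or_false] at hacc1
        rcases hacc1 with rfl | rfl
        · exact hxcase hlen rfl
        · -- h = a j 2
          by_cases hlit : litB v pol a j 2 = true
          · by_cases hsel : selB v pol a j = 2
            · exact hnm (mem_sel2 hj hsel (by rw [hsel]; exact hlit))
            · have hsel2 : (selB v pol a j : ℕ) < 2 := by
                by_contra hcon
                apply hsel
                apply Fin.ext
                have := (selB v pol a j).isLt
                omega
              refine fullRef (Hos11.a j 2) (Res11.d j) (Res11.c j 2) [Res11.c j 2]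
                ?_ ?_ ?_ hcap
              · have hmm := mem_MB.mp (mem_dA2 (m₂ := m₂) (v := v) (pol := pol)
                  (kIdx := kIdx) (a := a) hj hsel2)
                simpa using hmm
              · intro r' hr'
                rcases (fM_inv_a2 hr').2 with ⟨h1, -⟩ | ⟨-, hs, -⟩
                · exact h1
                · rw [hs] at hsel2
                  exact absurd hsel2 (by decide)
              · simp [prefHos11, hj]
          · have hlitF : litB v pol a j 2 = false := by simpa using hlit
            refine topRef (Res11.c j 2) (Hos11.x (v j 2) (kIdx j 2)) (Hos11.a j 2)
              [Hos11.a j 2] ?_ ?_ himpr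
            · simp only [fM]
              rw [if_pos hlen, if_neg (by simp [hlitF])]
            · simp [prefRes11, hj]

end Backward4
/-- `I'` admits a strongly stable matching iff the PPN-3-SAT instance `I` is
satisfiable. -/
theorem ppn223_reduction_correct {n m m₂ : ℕ} (hm₂ : m₂ ≤ m)
    (v : Fin m → Fin 3 → Fin n) (pol : Fin m → Fin 3 → Bool)
    (occ : Fin n → Fin 3 → Fin m × Fin 3) (kIdx : Fin m → Fin 3 → Fin 3)
    (hoccValid : ∀ i k, ((occ i k).2 : ℕ) < (if ((occ i k).1 : ℕ) < m₂ then 2 else 3))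
    (hoccVar : ∀ i k, v (occ i k).1 (occ i k).2 = i)
    (hoccPol : ∀ i k, pol (occ i k).1 (occ i k).2 = decide ((k : ℕ) < 2))
    (hoccInj : ∀ i, Function.Injective (occ i))
    (hkIdx : ∀ (j : Fin m) (l : Fin 3), (l : ℕ) < (if (j : ℕ) < m₂ then 2 else 3) →
      occ (v j l) (kIdx j l) = (j, l)) :
    (∃ M : Finset (Res11 n m × Hos11 n m),
        (ppnInstance223 m₂ v occ kIdx).IsStronglyStable M) ↔
    (∃ a : Fin n → Bool, ∀ j : Fin m, ∃ l : Fin 3,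
        (l : ℕ) < (if (j : ℕ) < m₂ then 2 else 3) ∧
        (if pol j l then a (v j l) else !(a (v j l))) = true) := by
  constructor
  · rintro ⟨M, hM⟩
    exact ⟨aM M, forward_sat hkIdx hoccPol hM⟩
  · rintro ⟨a, ha⟩
    refine ⟨MB m₂ v pol kIdx a, MB_matching hkIdx,
      MB_feasible hoccVar hoccPol hkIdx,
      MB_nosbp hoccValid hoccVar hoccPol hoccInj hkIdx ?_⟩
    intro j
    obtain ⟨l, h1, h2⟩ := ha j
    exact ⟨l, h1, h2⟩
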